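/- arXiv:2605.07431 — 3 statements merged into one kernel-verified Lean document; each statement's English description precedes it below -/
import Mathlib

section
/- Let α, β, γ ∈ ℝ with γ > β > 0, and let z ∈ ℝ with |z| < 1. Then ₂F₁(α,β;γ;z) = (Γ(γ)/(Γ(β)Γ(γ−β))) · ∫₀¹ t^{β−1} (1−t)^{γ−β−1} (1−zt)^{−α} dt, where the integral is a convergent improper Riemann (Lebesgue) integral and the powers are the standard real powers of the positive real numbers t, 1−t, 1−zt for t ∈ (0,1). -/
set_option maxHeartbeats 1000000

open MeasureTheory Real Set Filter
open scoped Topology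

/-- The Pochhammer symbol (rising factorial) `(a)_n = a (a+1) ⋯ (a+n-1)`. -/
noncomputable def pochR (a : ℝ) (n : ℕ) : ℝ := ∏ i ∈ Finset.range n, (a + i)

/-- The Gauss hypergeometric function `₂F₁(a,b;c;z)` (real parameters and argument),
defined by its series for `|z| < 1`. -/
noncomputable def hyp2F1R (a b c z : ℝ) : ℝ :=
  ∑' n : ℕ, pochR a n * pochR b n / (pochR c n * n.factorial) * z ^ n


lemma pochR_zero (a : ℝ) : pochR a 0 = 1 := Finset.prod_range_zero _

lemma pochR_succ (a : ℝ) (n : ℕ) : pochR a (n + 1) = pochR a n * (a + n) :=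
  Finset.prod_range_succ _ _

lemma pochR_pos {a : ℝ} (ha : 0 < a) (n : ℕ) : 0 < pochR a n :=
  Finset.prod_pos fun i _ => by positivity

lemma pochR_nonneg {a : ℝ} (ha : 0 ≤ a) (n : ℕ) : 0 ≤ pochR a n :=
  Finset.prod_nonneg fun i _ => by positivity

lemma abs_pochR_le (a : ℝ) (n : ℕ) : |pochR a n| ≤ pochR |a| n := by
  rw [pochR, pochR, Finset.abs_prod]
  refine Finset.prod_le_prod (fun i _ => abs_nonneg _) (fun i _ => ?_)
  calc |a + (i : ℝ)| ≤ |a| + |(i : ℝ)| := abs_add_le _ _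
    _ = |a| + i := by rw [abs_of_nonneg (by positivity : (0:ℝ) ≤ (i:ℝ))]

lemma pochR_zero_left {n : ℕ} (hn : n ≠ 0) : pochR 0 n = 0 := by
  rw [pochR]
  refine Finset.prod_eq_zero (Finset.mem_range.2 (Nat.pos_of_ne_zero hn)) ?_
  simp

/-- Master summability lemma. -/
lemma summable_poch_aux {a b r : ℝ} (ha : 0 ≤ a) (hb : 0 ≤ b) (hr0 : 0 ≤ r) (hr : r < 1) :
    Summable (fun n : ℕ => pochR a n / n.factorial * ((b + n) * r ^ n)) := by
  rcases eq_or_lt_of_le ha with ha0 | ha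
  · refine summable_of_ne_finset_zero (s := {0}) fun n hn => ?_
    simp only [Finset.mem_singleton] at hn
    rw [← ha0, pochR_zero_left hn]
    simp
  rcases eq_or_lt_of_le hr0 with hr0' | hrpos
  · refine summable_of_ne_finset_zero (s := {0}) fun n hn => ?_
    simp only [Finset.mem_singleton] at hn
    rw [← hr0', zero_pow hn]
    simp
  refine summable_of_ratio_test_tendsto_lt_one hr ?_ ?_
  · filter_upwards [eventually_ge_atTop 1] with n hn
    have h1 : (0:ℝ) < pochR a n := pochR_pos ha n
    have h2 : (0:ℝ) < b + n := by
      have : (1:ℝ) ≤ (n:ℝ) := by exact_mod_cast hn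
      nlinarith
    have h3 : (0:ℝ) < r ^ n := pow_pos hrpos n
    have h4 : (0:ℝ) < (n.factorial : ℝ) := by positivity
    positivity
  · have key : ∀ᶠ n : ℕ in atTop,
        ‖pochR a (n+1) / ((n+1).factorial : ℝ) * ((b + ((n+1 : ℕ) : ℝ)) * r ^ (n+1))‖ /
          ‖pochR a n / n.factorial * ((b + n) * r ^ n)‖ =
        r * ((a + n) / (n + 1)) * ((b + n + 1) / (b + n)) := by
      filter_upwards [eventually_ge_atTop 1] with n hn
      have hn1 : (1:ℝ) ≤ (n:ℝ) := by exact_mod_cast hn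
      have h1 : (0:ℝ) < pochR a n := pochR_pos ha n
      have h2 : (0:ℝ) < b + n := by nlinarith
      have h3 : (0:ℝ) < r ^ n := pow_pos hrpos n
      have h4 : (0:ℝ) < (n.factorial : ℝ) := by positivity
      have han : (0:ℝ) < a + n := by nlinarith
      rw [pochR_succ, Nat.factorial_succ, pow_succ]
      push_cast
      set P := pochR a n with hP
      set F := (n.factorial : ℝ) with hF
      set R := r ^ n with hR
      rw [norm_of_nonneg (by positivity), norm_of_nonneg (by positivity)]
      rw [div_eq_iff (by positivity : P / F * ((b + n) * R) ≠ 0)]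
      field_simp
      ring
    have hden : Tendsto (fun n : ℕ => (n:ℝ) + 1) atTop atTop :=
      tendsto_atTop_add_const_right _ 1 tendsto_natCast_atTop_atTop
    have hden2 : Tendsto (fun n : ℕ => b + (n:ℝ)) atTop atTop :=
      tendsto_atTop_add_const_left _ b tendsto_natCast_atTop_atTop
    have hA : Tendsto (fun n : ℕ => (a + n) / (n + 1)) atTop (𝓝 1) := by
      have h : Tendsto (fun n : ℕ => (a - 1) / ((n:ℝ) + 1)) atTop (𝓝 0) :=
        Tendsto.div_atTop (tendsto_const_nhds : Tendsto (fun _ : ℕ => a - 1) atTop (𝓝 (a-1))) hden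
      have h2 : Tendsto (fun n : ℕ => 1 + (a - 1) / ((n:ℝ) + 1)) atTop (𝓝 (1 + 0)) :=
        tendsto_const_nhds.add h
      rw [add_zero] at h2
      refine h2.congr fun n => ?_
      have : ((n:ℝ) + 1) ≠ 0 := by positivity
      field_simp
      ring
    have hB : Tendsto (fun n : ℕ => (b + n + 1) / (b + n)) atTop (𝓝 1) := by
      have h : Tendsto (fun n : ℕ => (1:ℝ) / (b + (n:ℝ))) atTop (𝓝 0) :=
        Tendsto.div_atTop (tendsto_const_nhds : Tendsto (fun _ : ℕ => (1:ℝ)) atTop (𝓝 1)) hden2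
      have h2 : Tendsto (fun n : ℕ => 1 + 1 / (b + (n:ℝ))) atTop (𝓝 (1 + 0)) :=
        tendsto_const_nhds.add h
      rw [add_zero] at h2
      refine h2.congr' ?_
      filter_upwards [eventually_ge_atTop 1] with n hn
      have hn1 : (1:ℝ) ≤ (n:ℝ) := by exact_mod_cast hn
      have hne : b + (n:ℝ) ≠ 0 := by nlinarith
      field_simp
    have lim : Tendsto (fun n : ℕ => r * ((a + n) / (n + 1)) * ((b + n + 1) / (b + n)))
        atTop (𝓝 (r * 1 * 1)) := (tendsto_const_nhds.mul hA).mul hB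
    rw [mul_one, mul_one] at lim
    exact Tendsto.congr' (key.mono fun n h => h.symm) lim

/-- Summability of the binomial series. -/
lemma summable_binomial (α : ℝ) {x : ℝ} (hx : |x| < 1) :
    Summable (fun n : ℕ => pochR α n / n.factorial * x ^ n) := by
  refine Summable.of_norm_bounded
    (summable_poch_aux (abs_nonneg α) zero_le_one (abs_nonneg x) hx) fun n => ?_
  have h1 : |pochR α n| ≤ pochR |α| n := abs_pochR_le α n
  have h2 : (0:ℝ) < (n.factorial : ℝ) := by positivity
  have h3 : (0:ℝ) ≤ |x| ^ n := by positivity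
  rw [norm_mul, norm_div, norm_pow, Real.norm_eq_abs, Real.norm_eq_abs, Real.norm_eq_abs,
    abs_of_pos h2]
  have : |pochR α n| / n.factorial * |x| ^ n ≤ pochR |α| n / n.factorial * |x| ^ n := by
    gcongr
  refine this.trans ?_
  have hn1 : (1:ℝ) ≤ 1 + (n:ℝ) := le_add_of_nonneg_right (Nat.cast_nonneg n)
  have hp : (0:ℝ) ≤ pochR |α| n / n.factorial :=
    div_nonneg (pochR_nonneg (abs_nonneg α) n) h2.le
  nlinarith [mul_le_mul_of_nonneg_left (mul_le_mul_of_nonneg_right hn1 h3) hp]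

lemma summable_binomial_mul (α b : ℝ) (hb : 0 ≤ b) {x : ℝ} (hx : |x| < 1) :
    Summable (fun n : ℕ => pochR α n / n.factorial * ((b + n) * x ^ n)) := by
  refine Summable.of_norm_bounded
    (summable_poch_aux (abs_nonneg α) hb (abs_nonneg x) hx) fun n => ?_
  have h1 : |pochR α n| ≤ pochR |α| n := abs_pochR_le α n
  have h2 : (0:ℝ) < (n.factorial : ℝ) := by positivity
  have h3 : (0:ℝ) ≤ b + n := by positivity
  rw [norm_mul, norm_div, norm_mul, norm_pow, Real.norm_eq_abs, Real.norm_eq_abs,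
    Real.norm_eq_abs, Real.norm_eq_abs, abs_of_pos h2, abs_of_nonneg h3]
  have hp : (0:ℝ) ≤ (b + n) * |x| ^ n := by positivity
  have : |pochR α n| / n.factorial ≤ pochR |α| n / n.factorial := by gcongr
  exact mul_le_mul_of_nonneg_right this hp

lemma summable_deriv_aux (α : ℝ) {s : ℝ} (h0 : 0 < s) (h1 : s < 1) :
    Summable (fun n : ℕ => |pochR α n / n.factorial| * (n * s ^ (n - 1))) := by
  have hs : |s| < 1 := by rwa [abs_of_pos h0]
  have hsum : Summable (fun n : ℕ => (1 / s) * (pochR |α| n / n.factorial * ((0 + n) * s ^ n))) :=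
    (summable_poch_aux (abs_nonneg α) le_rfl h0.le h1).mul_left (1 / s)
  refine hsum.of_nonneg_of_le (fun n => by positivity) (fun n => ?_)
  rcases n with _ | m
  · simp
  · have h2 : (0:ℝ) < ((m+1).factorial : ℝ) := by positivity
    have h1' : |pochR α (m+1)| ≤ pochR |α| (m+1) := abs_pochR_le α (m+1)
    have hpow : ((m+1 : ℕ) : ℝ) * s ^ ((m+1) - 1) ≥ 0 := by positivity
    have hle : |pochR α (m+1) / (m+1).factorial| ≤ pochR |α| (m+1) / (m+1).factorial := by
      rw [abs_div, abs_of_pos h2]; gcongr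
    have := hle
    calc |pochR α (m+1) / (m+1).factorial| * ((m+1 : ℕ) * s ^ ((m+1) - 1))
        ≤ pochR |α| (m+1) / (m+1).factorial * ((m+1 : ℕ) * s ^ ((m+1) - 1)) := by gcongr
      _ = (1 / s) * (pochR |α| (m+1) / (m+1).factorial * ((0 + (m+1 : ℕ)) * s ^ (m+1))) := by
          have : s ^ (m + 1) = s ^ m * s := pow_succ s m
          simp only [Nat.add_sub_cancel, this]
          field_simp
          ring

/-- Term-by-term derivative of the binomial series. -/
lemma hasDerivAt_binomial (α : ℝ) {y : ℝ} (hy : |y| < 1) :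
    HasDerivAt (fun t : ℝ => ∑' n : ℕ, pochR α n / n.factorial * t ^ n)
      (∑' n : ℕ, pochR α n / n.factorial * (n * y ^ (n - 1))) y := by
  set s : ℝ := (|y| + 1) / 2 with hs
  have hys : |y| < s := by rw [hs]; linarith
  have hs0 : 0 < s := lt_of_le_of_lt (abs_nonneg y) hys
  have hs1 : s < 1 := by rw [hs]; linarith
  refine hasDerivAt_tsum_of_isPreconnected
    (u := fun n : ℕ => |pochR α n / n.factorial| * (n * s ^ (n - 1)))
    (summable_deriv_aux α hs0 hs1) (isOpen_Ioo (a := -s) (b := s))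
    (convex_Ioo _ _).isPreconnected
    (fun n z _ => (hasDerivAt_pow n z).const_mul (pochR α n / n.factorial))
    (fun n z hz => ?_) (by rw [mem_Ioo, ← abs_lt]; exact hys)
    (summable_binomial α hy) (by rw [mem_Ioo, ← abs_lt]; exact hys)
  have hzs : |z| ≤ s := le_of_lt (abs_lt.2 hz)
  rw [norm_mul, Real.norm_eq_abs, Real.norm_eq_abs, abs_mul, abs_pow, Nat.abs_cast]
  have hpow : |z| ^ (n - 1) ≤ s ^ (n - 1) := pow_le_pow_left₀ (abs_nonneg z) hzs _
  exact mul_le_mul_of_nonneg_left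
    (mul_le_mul_of_nonneg_left hpow (Nat.cast_nonneg n)) (abs_nonneg _)

lemma summable_deriv_binomial (α : ℝ) {y : ℝ} (hy : |y| < 1) :
    Summable (fun n : ℕ => pochR α n / n.factorial * (n * y ^ (n - 1))) := by
  set s : ℝ := (|y| + 1) / 2 with hs
  have hys : |y| < s := by rw [hs]; linarith
  have hs0 : 0 < s := lt_of_le_of_lt (abs_nonneg y) hys
  have hs1 : s < 1 := by rw [hs]; linarith
  refine (summable_deriv_aux α hs0 hs1).of_norm_bounded fun n => ?_
  rw [norm_mul, Real.norm_eq_abs, Real.norm_eq_abs, abs_mul, abs_pow, Nat.abs_cast]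
  exact mul_le_mul_of_nonneg_left
    (mul_le_mul_of_nonneg_left (pow_le_pow_left₀ (abs_nonneg y) hys.le _) (Nat.cast_nonneg n))
    (abs_nonneg _)

/-- The ODE satisfied by the binomial series. -/
lemma binomial_ode (α : ℝ) {y : ℝ} (hy : |y| < 1) :
    (1 - y) * (∑' n : ℕ, pochR α n / n.factorial * (n * y ^ (n - 1))) =
      α * ∑' n : ℕ, pochR α n / n.factorial * y ^ n := by
  set c : ℕ → ℝ := fun n => pochR α n / n.factorial with hc
  have sum1 : Summable (fun n : ℕ => c n * y ^ n) := summable_binomial α hy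
  have sum2 : Summable (fun n : ℕ => c n * (n * y ^ (n - 1))) := summable_deriv_binomial α hy
  have sum3 : Summable (fun n : ℕ => c n * ((0 : ℝ) + n) * y ^ n) := by
    have := (summable_binomial_mul α 0 le_rfl hy)
    refine this.congr fun n => by rw [hc]; ring
  have sum3' : Summable (fun n : ℕ => c n * n * y ^ n) := by
    refine sum3.congr fun n => by ring_nf
  set D := ∑' n : ℕ, c n * (n * y ^ (n - 1)) with hD
  set A := ∑' n : ℕ, c n * n * y ^ n with hA
  set S := ∑' n : ℕ, c n * y ^ n with hS
  have h1 : y * D = A := by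
    rw [hD, ← tsum_mul_left, hA]
    refine tsum_congr fun n => ?_
    rcases n with _ | m
    · simp
    · have : y ^ (m + 1) = y ^ m * y := pow_succ y m
      simp only [Nat.add_sub_cancel, this]
      push_cast
      ring
  have h2 : D = α * S + A := by
    rw [hD, sum2.tsum_eq_zero_add]
    have hz : c 0 * ((0 : ℕ) * y ^ ((0 : ℕ) - 1)) = 0 := by simp
    rw [hz, zero_add]
    have hterm : ∀ n : ℕ, c (n + 1) * (((n + 1 : ℕ) : ℝ) * y ^ ((n + 1) - 1)) =
        α * (c n * y ^ n) + c n * n * y ^ n := by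
      intro n
      have hfac : ((n + 1).factorial : ℝ) = (n + 1) * n.factorial := by
        rw [Nat.factorial_succ]; push_cast; ring
      have hne : ((n : ℝ) + 1) ≠ 0 := by positivity
      have hfne : ((n.factorial : ℝ)) ≠ 0 := by positivity
      simp only [hc, Nat.add_sub_cancel, pochR_succ, hfac]
      push_cast
      field_simp
    rw [tsum_congr hterm, Summable.tsum_add ((sum1.mul_left α).congr fun n => rfl) sum3']
    congr 1
    rw [tsum_mul_left]
  have := h2
  nlinarith [h1, h2]

/-- The binomial series: `(1-x)^(-α) = ∑ (α)_n / n! xⁿ` for `|x| < 1`. -/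
lemma hasSum_binomial (α : ℝ) {x : ℝ} (hx : |x| < 1) :
    HasSum (fun n : ℕ => pochR α n / n.factorial * x ^ n) ((1 - x) ^ (-α) : ℝ) := by
  set g : ℝ → ℝ := fun y => (∑' n : ℕ, pochR α n / n.factorial * y ^ n) * (1 - y) ^ α with hg
  have hx1 : (0:ℝ) < 1 - x := by
    have := abs_lt.1 hx
    linarith [this.2]
  have hgderiv : ∀ y ∈ Ioo (-1 : ℝ) 1, HasDerivAt g 0 y := by
    intro y hy
    have hy' : |y| < 1 := abs_lt.2 ⟨hy.1, hy.2⟩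
    have h1y : (0:ℝ) < 1 - y := by linarith [hy.2]
    have d1 := hasDerivAt_binomial α hy'
    have d2 : HasDerivAt (fun t : ℝ => (1 - t) ^ α)
        (α * (1 - y) ^ (α - 1) * (-1)) y := by
      have inner : HasDerivAt (fun t : ℝ => 1 - t) (-1) y := by
        simpa using (hasDerivAt_id y).const_sub 1
      exact (Real.hasDerivAt_rpow_const (Or.inl (ne_of_gt h1y))).comp y inner
    have prod := d1.mul d2
    have key : (∑' n : ℕ, pochR α n / n.factorial * (n * y ^ (n - 1))) * (1 - y) =
        α * ∑' n : ℕ, pochR α n / n.factorial * y ^ n := by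
      rw [mul_comm]; exact binomial_ode α hy'
    refine prod.congr_deriv ?_
    rw [Real.rpow_sub h1y, Real.rpow_one]
    set D := ∑' n : ℕ, pochR α n / n.factorial * (n * y ^ (n - 1))
    set S := ∑' n : ℕ, pochR α n / n.factorial * y ^ n
    set P := (1 - y) ^ α
    field_simp
    linear_combination P * key
  have hconst : g x = g 0 := by
    have h := Convex.norm_image_sub_le_of_norm_hasDerivWithin_le
      (f := g) (f' := fun _ => (0:ℝ)) (C := 0) (s := Ioo (-1 : ℝ) 1)
      (x := (0:ℝ)) (y := x)
      (fun y hy => (hgderiv y hy).hasDerivWithinAt)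
      (fun y hy => by simp) (convex_Ioo _ _)
      (mem_Ioo.2 ⟨by norm_num, by norm_num⟩)
      (mem_Ioo.2 ⟨(abs_lt.1 hx).1, (abs_lt.1 hx).2⟩)
    have : ‖g x - g 0‖ ≤ 0 := by simpa using h
    have := le_antisymm this (norm_nonneg _)
    rwa [norm_eq_zero, sub_eq_zero] at this
  have hg0 : g 0 = 1 := by
    rw [hg]
    simp only [sub_zero, Real.one_rpow, mul_one]
    rw [tsum_eq_single 0 (fun n hn => by simp [zero_pow hn])]
    simp [pochR_zero]
  have hSx : (∑' n : ℕ, pochR α n / n.factorial * x ^ n) = (1 - x) ^ (-α) := by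
    have h1 : (∑' n : ℕ, pochR α n / n.factorial * x ^ n) * (1 - x) ^ α = 1 :=
      hconst.trans hg0
    rw [Real.rpow_neg hx1.le]
    exact eq_inv_of_mul_eq_one_left (by linarith [h1, mul_comm (∑' n : ℕ, pochR α n / n.factorial * x ^ n) ((1 - x) ^ α)])
  rw [← hSx]
  exact (summable_binomial α hx).hasSum

lemma complex_eqOn {p q : ℝ} :
    ∀ t ∈ Ioo (0:ℝ) 1,
      ((t:ℂ) ^ ((p:ℂ) - 1) * ((1:ℂ) - (t:ℂ)) ^ ((q:ℂ) - 1)).re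
        = t ^ (p - 1) * (1 - t) ^ (q - 1) := by
  intro t ht
  have h1 : ((p:ℂ) - 1) = ((p - 1 : ℝ) : ℂ) := by push_cast; ring
  have h2 : ((q:ℂ) - 1) = ((q - 1 : ℝ) : ℂ) := by push_cast; ring
  have h3 : ((1:ℂ) - (t:ℂ)) = ((1 - t : ℝ) : ℂ) := by push_cast; ring
  rw [h1, h2, h3, ← Complex.ofReal_cpow ht.1.le, ← Complex.ofReal_cpow (by linarith [ht.2] : (0:ℝ) ≤ 1 - t),
    ← Complex.ofReal_mul, Complex.ofReal_re]

lemma complex_beta_integrableOn {p q : ℝ} (hp : 0 < p) (hq : 0 < q) :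
    IntegrableOn (fun t : ℝ => (t:ℂ) ^ ((p:ℂ) - 1) * ((1:ℂ) - (t:ℂ)) ^ ((q:ℂ) - 1))
      (Ioc (0:ℝ) 1) := by
  have h := Complex.betaIntegral_convergent (u := (p:ℂ)) (v := (q:ℂ))
    (by simpa using hp) (by simpa using hq)
  rwa [intervalIntegrable_iff_integrableOn_Ioc_of_le zero_le_one] at h

lemma betaIntegrableOn {p q : ℝ} (hp : 0 < p) (hq : 0 < q) :
    IntegrableOn (fun t : ℝ => t ^ (p - 1) * (1 - t) ^ (q - 1)) (Ioo (0:ℝ) 1) := by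
  have h := ((complex_beta_integrableOn hp hq).mono_set Ioo_subset_Ioc_self)
  have hre : IntegrableOn
      (fun t : ℝ => ((t:ℂ) ^ ((p:ℂ) - 1) * ((1:ℂ) - (t:ℂ)) ^ ((q:ℂ) - 1)).re)
      (Ioo (0:ℝ) 1) := h.re
  exact (integrableOn_congr_fun complex_eqOn measurableSet_Ioo).1 hre

lemma betaIntegral_real {p q : ℝ} (hp : 0 < p) (hq : 0 < q) :
    ∫ t in Ioo (0:ℝ) 1, t ^ (p - 1) * (1 - t) ^ (q - 1)
      = Real.Gamma p * Real.Gamma q / Real.Gamma (p + q) := by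
  have hC : Complex.betaIntegral p q
      = ((Real.Gamma p * Real.Gamma q / Real.Gamma (p + q) : ℝ) : ℂ) := by
    have h := Complex.Gamma_mul_Gamma_eq_betaIntegral
      (s := (p:ℂ)) (t := (q:ℂ)) (by simpa using hp) (by simpa using hq)
    have hne : Complex.Gamma ((p:ℂ) + q) ≠ 0 :=
      Complex.Gamma_ne_zero_of_re_pos (by simp [hp.le]; positivity)
    have : Complex.betaIntegral p q
        = Complex.Gamma p * Complex.Gamma q / Complex.Gamma ((p:ℂ) + q) := by
      field_simp
      linear_combination -h
    rw [this, ← Complex.ofReal_add, Complex.Gamma_ofReal, Complex.Gamma_ofReal,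
      Complex.Gamma_ofReal]
    push_cast
    ring
  have hIoc : ∫ t in Ioc (0:ℝ) 1, (t:ℂ) ^ ((p:ℂ) - 1) * ((1:ℂ) - (t:ℂ)) ^ ((q:ℂ) - 1)
      = Complex.betaIntegral p q := by
    rw [Complex.betaIntegral, intervalIntegral.integral_of_le zero_le_one]
  have hIoo : ∫ t in Ioo (0:ℝ) 1, (t:ℂ) ^ ((p:ℂ) - 1) * ((1:ℂ) - (t:ℂ)) ^ ((q:ℂ) - 1)
      = Complex.betaIntegral p q := by
    rw [← hIoc, MeasureTheory.integral_Ioc_eq_integral_Ioo]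
  calc ∫ t in Ioo (0:ℝ) 1, t ^ (p - 1) * (1 - t) ^ (q - 1)
      = ∫ t in Ioo (0:ℝ) 1,
          ((t:ℂ) ^ ((p:ℂ) - 1) * ((1:ℂ) - (t:ℂ)) ^ ((q:ℂ) - 1)).re := by
        refine setIntegral_congr_fun measurableSet_Ioo fun t ht => (complex_eqOn t ht).symm
    _ = (∫ t in Ioo (0:ℝ) 1, (t:ℂ) ^ ((p:ℂ) - 1) * ((1:ℂ) - (t:ℂ)) ^ ((q:ℂ) - 1)).re := by
        rw [← RCLike.re_to_complex]
        exact integral_re ((complex_beta_integrableOn hp hq).mono_set Ioo_subset_Ioc_self)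
    _ = Real.Gamma p * Real.Gamma q / Real.Gamma (p + q) := by
        rw [hIoo, hC, Complex.ofReal_re]

lemma Gamma_add_nat_pochR {a : ℝ} (ha : 0 < a) (n : ℕ) :
    Real.Gamma (a + n) = Real.Gamma a * pochR a n := by
  induction n with
  | zero => simp [pochR_zero]
  | succ m ih =>
    have h1 : a + ((m + 1 : ℕ) : ℝ) = (a + m) + 1 := by push_cast; ring
    have h2 : a + (m : ℝ) ≠ 0 := by positivity
    rw [h1, Real.Gamma_add_one h2, ih, pochR_succ]
    ring

/-- Euler integral representation of the Gauss hypergeometric function: for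
`γ > β > 0` and `|z| < 1`,
`₂F₁(α,β;γ;z) = Γ(γ)/(Γ(β)Γ(γ−β)) ∫₀¹ t^{β−1} (1−t)^{γ−β−1} (1−zt)^{−α} dt`,
the integral being a convergent Lebesgue integral. -/
theorem gauss_hypergeometric_euler_integral
    (α β γ z : ℝ) (hβ : 0 < β) (hβγ : β < γ) (hz : |z| < 1) :
    MeasureTheory.IntegrableOn
      (fun t : ℝ => t ^ (β - 1) * (1 - t) ^ (γ - β - 1) * (1 - z * t) ^ (-α))
      (Set.Ioo (0 : ℝ) 1) ∧
    hyp2F1R α β γ z =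
      Real.Gamma γ / (Real.Gamma β * Real.Gamma (γ - β)) *
        ∫ t in Set.Ioo (0 : ℝ) 1,
          t ^ (β - 1) * (1 - t) ^ (γ - β - 1) * (1 - z * t) ^ (-α) := by
  have hγβ : 0 < γ - β := by linarith
  have hγ : 0 < γ := hβ.trans hβγ
  -- basic facts about 1 - z*t on Ioo 0 1
  have hzt : ∀ t ∈ Ioo (0:ℝ) 1, 1 - |z| ≤ 1 - z * t ∧ 1 - z * t ≤ 2 := by
    intro t ht
    have h1 : z * t ≤ |z| * t := mul_le_mul_of_nonneg_right (le_abs_self z) ht.1.le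
    have h2 : |z| * t ≤ |z| := mul_le_of_le_one_right (abs_nonneg z) ht.2.le
    have h3 : -(z * t) ≤ |z| * t := by
      have := neg_le_abs (z * t)
      calc -(z * t) ≤ |z * t| := neg_le_abs _
        _ = |z| * |t| := abs_mul z t
        _ = |z| * t := by rw [abs_of_pos ht.1]
    constructor <;> nlinarith
  have hzpos : 0 < 1 - |z| := by linarith
  -- bound for (1 - z*t)^(-α)
  obtain ⟨M, hM0, hM⟩ : ∃ M : ℝ, 0 ≤ M ∧ ∀ t ∈ Ioo (0:ℝ) 1, (1 - z * t) ^ (-α) ≤ M := by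
    rcases le_or_gt 0 (-α) with hα | hα
    · refine ⟨2 ^ (-α), Real.rpow_nonneg (by norm_num) _, fun t ht => ?_⟩
      exact Real.rpow_le_rpow (by linarith [(hzt t ht).1]) (hzt t ht).2 hα
    · refine ⟨(1 - |z|) ^ (-α), Real.rpow_nonneg hzpos.le _, fun t ht => ?_⟩
      exact Real.rpow_le_rpow_of_nonpos hzpos (hzt t ht).1 hα.le
  -- continuity / measurability of the integrand
  have hcont : ContinuousOn
      (fun t : ℝ => t ^ (β - 1) * (1 - t) ^ (γ - β - 1) * (1 - z * t) ^ (-α))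
      (Ioo (0:ℝ) 1) := by
    refine ContinuousOn.mul (ContinuousOn.mul ?_ ?_) ?_
    · exact continuousOn_id.rpow_const fun t ht => Or.inl (ne_of_gt ht.1)
    · refine (continuous_const.sub continuous_id).continuousOn.rpow_const
        fun t ht => Or.inl ?_
      simp only [Pi.sub_apply, id_eq]
      have := ht.2
      intro h
      nlinarith [sub_eq_zero.1 h]
    · refine (continuous_const.sub (continuous_const.mul continuous_id)).continuousOn.rpow_const
        fun t ht => Or.inl ?_
      simp only [Pi.sub_apply, Pi.mul_apply, id_eq]
      have h1 := (hzt t ht).1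
      intro h
      nlinarith
  -- integrability (first conjunct)
  have hbase := betaIntegrableOn hβ hγβ
  have hInt : IntegrableOn
      (fun t : ℝ => t ^ (β - 1) * (1 - t) ^ (γ - β - 1) * (1 - z * t) ^ (-α))
      (Ioo (0:ℝ) 1) := by
    refine Integrable.mono' (hbase.const_mul M)
      (hcont.aestronglyMeasurable measurableSet_Ioo) ?_
    filter_upwards [ae_restrict_mem measurableSet_Ioo] with t ht
    have h1 : (0:ℝ) ≤ t ^ (β - 1) := Real.rpow_nonneg ht.1.le _
    have h2 : (0:ℝ) ≤ (1 - t) ^ (γ - β - 1) := Real.rpow_nonneg (by linarith [ht.2]) _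
    have h3 : (0:ℝ) ≤ (1 - z * t) ^ (-α) := Real.rpow_nonneg (by linarith [(hzt t ht).1]) _
    rw [Real.norm_eq_abs, abs_of_nonneg (by positivity)]
    calc t ^ (β - 1) * (1 - t) ^ (γ - β - 1) * (1 - z * t) ^ (-α)
        ≤ t ^ (β - 1) * (1 - t) ^ (γ - β - 1) * M :=
          mul_le_mul_of_nonneg_left (hM t ht) (by positivity)
      _ = M * (t ^ (β - 1) * (1 - t) ^ (γ - β - 1)) := by ring
  refine ⟨hInt, ?_⟩
  -- the terms of the series
  set k : ℕ → ℝ := fun n => pochR α n / n.factorial * z ^ n with hk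
  set F : ℕ → ℝ → ℝ := fun n t => k n * (t ^ (β + n - 1) * (1 - t) ^ (γ - β - 1)) with hF
  have hFint : ∀ n : ℕ, IntegrableOn (fun t => t ^ (β + n - 1) * (1 - t) ^ (γ - β - 1))
      (Ioo (0:ℝ) 1) := by
    intro n
    have := betaIntegrableOn (p := β + n) (q := γ - β) (by positivity) hγβ
    simpa using this
  have hFint' : ∀ n : ℕ, IntegrableOn (F n) (Ioo (0:ℝ) 1) := fun n => (hFint n).const_mul _
  -- pointwise sum
  have hptwise : ∀ t ∈ Ioo (0:ℝ) 1,
      HasSum (fun n => F n t)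
        (t ^ (β - 1) * (1 - t) ^ (γ - β - 1) * (1 - z * t) ^ (-α)) := by
    intro t ht
    have hzt1 : |z * t| < 1 := by
      rw [abs_mul, abs_of_pos ht.1]
      calc |z| * t ≤ |z| * 1 := by
            exact mul_le_mul_of_nonneg_left ht.2.le (abs_nonneg z)
        _ < 1 := by rw [mul_one]; exact hz
    have h := (hasSum_binomial α hzt1).mul_left (t ^ (β - 1) * (1 - t) ^ (γ - β - 1))
    have heq : (fun n : ℕ => (t ^ (β - 1) * (1 - t) ^ (γ - β - 1)) *
        (pochR α n / n.factorial * (z * t) ^ n)) = fun n => F n t := by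
      funext n
      have hpow : t ^ (β + n - 1) = t ^ (β - 1) * t ^ (n : ℕ) := by
        rw [← Real.rpow_natCast t n, ← Real.rpow_add ht.1]
        congr 1
        ring
      simp only [hF, hk, mul_pow, hpow]
      ring
    rw [heq] at h
    exact h
  -- norm integral bound and summability
  set B : ℝ := ∫ t in Ioo (0:ℝ) 1, t ^ (β - 1) * (1 - t) ^ (γ - β - 1) with hB
  have hnormint : ∀ n : ℕ, ∫ t in Ioo (0:ℝ) 1, ‖F n t‖ ≤ |k n| * B := by
    intro n
    have heq : EqOn (fun t => ‖F n t‖)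
        (fun t => |k n| * (t ^ (β + n - 1) * (1 - t) ^ (γ - β - 1))) (Ioo (0:ℝ) 1) := by
      intro t ht
      have h1 : (0:ℝ) ≤ t ^ (β + n - 1) := Real.rpow_nonneg ht.1.le _
      have h2 : (0:ℝ) ≤ (1 - t) ^ (γ - β - 1) := Real.rpow_nonneg (by linarith [ht.2]) _
      simp only [hF, Real.norm_eq_abs, abs_mul, abs_of_nonneg h1, abs_of_nonneg h2]
    rw [setIntegral_congr_fun measurableSet_Ioo heq, integral_const_mul]
    refine mul_le_mul_of_nonneg_left ?_ (abs_nonneg _)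
    refine setIntegral_mono_on (hFint n) hbase measurableSet_Ioo fun t ht => ?_
    have h2 : (0:ℝ) ≤ (1 - t) ^ (γ - β - 1) := Real.rpow_nonneg (by linarith [ht.2]) _
    refine mul_le_mul_of_nonneg_right ?_ h2
    exact Real.rpow_le_rpow_of_exponent_ge ht.1 ht.2.le (by simp)
  have hBnonneg : 0 ≤ B := by
    rw [hB]
    refine setIntegral_nonneg measurableSet_Ioo fun t ht => ?_
    have h1 : (0:ℝ) ≤ t ^ (β - 1) := Real.rpow_nonneg ht.1.le _
    have h2 : (0:ℝ) ≤ (1 - t) ^ (γ - β - 1) := Real.rpow_nonneg (by linarith [ht.2]) _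
    positivity
  have hsummableNorm : Summable (fun n : ℕ => ∫ t in Ioo (0:ℝ) 1, ‖F n t‖) := by
    refine Summable.of_nonneg_of_le
      (fun n => integral_nonneg fun t => norm_nonneg _) hnormint ?_
    exact ((summable_binomial α hz).abs).mul_right B
  -- swap sum and integral
  have hswap : ∑' n : ℕ, ∫ t in Ioo (0:ℝ) 1, F n t
      = ∫ t in Ioo (0:ℝ) 1, ∑' n : ℕ, F n t :=
    MeasureTheory.integral_tsum_of_summable_integral_norm hFint' hsummableNorm
  have hinteq : ∫ t in Ioo (0:ℝ) 1, (∑' n : ℕ, F n t)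
      = ∫ t in Ioo (0:ℝ) 1, t ^ (β - 1) * (1 - t) ^ (γ - β - 1) * (1 - z * t) ^ (-α) :=
    setIntegral_congr_fun measurableSet_Ioo fun t ht => (hptwise t ht).tsum_eq
  -- value of each term
  have hval : ∀ n : ℕ, ∫ t in Ioo (0:ℝ) 1, F n t
      = k n * (Real.Gamma (β + n) * Real.Gamma (γ - β) / Real.Gamma (γ + n)) := by
    intro n
    have hb := betaIntegral_real (p := β + n) (q := γ - β) (by positivity) hγβ
    have hpq : β + (n:ℝ) + (γ - β) = γ + n := by ring
    rw [hpq] at hb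
    simp only [hF]
    rw [integral_const_mul, hb]
  -- final computation
  have hΓβ : Real.Gamma β ≠ 0 := (Real.Gamma_pos_of_pos hβ).ne'
  have hΓγ : Real.Gamma γ ≠ 0 := (Real.Gamma_pos_of_pos hγ).ne'
  have hΓγβ : Real.Gamma (γ - β) ≠ 0 := (Real.Gamma_pos_of_pos hγβ).ne'
  have final : Real.Gamma γ / (Real.Gamma β * Real.Gamma (γ - β)) *
      ∫ t in Ioo (0:ℝ) 1, t ^ (β - 1) * (1 - t) ^ (γ - β - 1) * (1 - z * t) ^ (-α)
      = ∑' n : ℕ, pochR α n * pochR β n / (pochR γ n * n.factorial) * z ^ n := by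
    rw [← hinteq, ← hswap, ← tsum_mul_left]
    refine tsum_congr fun n => ?_
    rw [hval n, Gamma_add_nat_pochR hβ n, Gamma_add_nat_pochR hγ n]
    have hpγ : pochR γ n ≠ 0 := (pochR_pos hγ n).ne'
    have hfac : ((n.factorial : ℝ)) ≠ 0 := by positivity
    simp only [hk]
    field_simp
  exact final.symm
end

section
/- Let α, β₁, β₂, γ₁, γ₂ ∈ ℂ with γ₁ and γ₂ not non-positive integers. The holomorphic function F(x,y) = F₂(α; β₁, β₂; γ₁, γ₂ | x, y) satisfies on the domain {(x,y) ∈ ℂ² : |x| + |y| < 1} the second Appell F₂ partial differential equation: y(1−y) ∂²F/∂y² − x y ∂²F/∂x∂y + (γ₂ − (α+β₂+1)y) ∂F/∂y − β₂ x ∂F/∂x − α β₂ F = 0. -/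
/-- The Pochhammer symbol (rising factorial) `(a)_n = a (a+1) ⋯ (a+n-1)`. -/
noncomputable def pochC (a : ℂ) (n : ℕ) : ℂ := ∏ i ∈ Finset.range n, (a + i)

/-- The Appell hypergeometric function `F₂(α; β₁, β₂; γ₁, γ₂ | x, y)`, defined by its
double series for `|x| + |y| < 1`. -/
noncomputable def appellF2C (α β₁ β₂ γ₁ γ₂ x y : ℂ) : ℂ :=
  ∑' p : ℕ × ℕ,
    pochC α (p.1 + p.2) * pochC β₁ p.1 * pochC β₂ p.2 /
        (pochC γ₁ p.1 * pochC γ₂ p.2 * p.1.factorial * p.2.factorial) *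
      x ^ p.1 * y ^ p.2

/-- Partial derivative in the first variable. -/
noncomputable def dX (F : ℂ → ℂ → ℂ) (x y : ℂ) : ℂ := deriv (fun x' => F x' y) x

/-- Partial derivative in the second variable. -/
noncomputable def dY (F : ℂ → ℂ → ℂ) (x y : ℂ) : ℂ := deriv (fun y' => F x y') y

namespace AppellAux

open Finset Filter Metric

lemma pochC_succ (a : ℂ) (n : ℕ) : pochC a (n + 1) = pochC a n * (a + n) :=
  Finset.prod_range_succ _ _

lemma pochC_ne_zero {a : ℂ} (ha : ∀ k : ℕ, a ≠ -(k : ℂ)) (n : ℕ) : pochC a n ≠ 0 := by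
  refine Finset.prod_ne_zero_iff.2 fun i _ => ?_
  intro h
  exact ha i (by linear_combination h)

lemma pochC_one (n : ℕ) : pochC 1 n = (n.factorial : ℂ) := by
  induction n with
  | zero => simp [pochC]
  | succ n ih =>
    rw [pochC_succ, ih, Nat.factorial_succ]
    push_cast
    ring

lemma one_ne_neg_nat : ∀ k : ℕ, (1 : ℂ) ≠ -(k : ℂ) := by
  intro k h
  have h2 := congrArg Complex.re h
  simp at h2
  have : (0 : ℝ) ≤ (k : ℝ) := Nat.cast_nonneg k
  linarith

/-- growth lemma: eventual ratio bound gives geometric bound. -/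
lemma geom_bound {a : ℕ → ℝ} {r : ℝ} (hr : 1 ≤ r) (ha : ∀ k, 0 ≤ a k) (K : ℕ)
    (h : ∀ k, K ≤ k → a (k + 1) ≤ r * a k) :
    ∃ D, 0 ≤ D ∧ ∀ k, a k ≤ D * r ^ k := by
  set D := ∑ j ∈ Finset.range (K + 1), a j with hD
  have hD0 : 0 ≤ D := Finset.sum_nonneg fun j _ => ha j
  have hr0 : (0 : ℝ) ≤ r := le_trans zero_le_one hr
  have hpow : ∀ k : ℕ, (1 : ℝ) ≤ r ^ k := fun k => one_le_pow₀ hr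
  have hle : ∀ j, j ≤ K → a j ≤ D := fun j hj =>
    Finset.single_le_sum (fun i _ => ha i) (Finset.mem_range.2 (Nat.lt_succ_of_le hj))
  refine ⟨D, hD0, ?_⟩
  have main : ∀ k, K ≤ k → a k ≤ D * r ^ k := by
    intro k hk
    induction k, hk using Nat.le_induction with
    | base =>
      exact (hle K le_rfl).trans (le_mul_of_one_le_right hD0 (hpow K))
    | succ k hk ih =>
      calc a (k + 1) ≤ r * a k := h k hk
        _ ≤ r * (D * r ^ k) := mul_le_mul_of_nonneg_left ih hr0
        _ = D * r ^ (k + 1) := by ring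
  intro k
  by_cases hk : K ≤ k
  · exact main k hk
  · exact (hle k (le_of_not_ge hk)).trans (le_mul_of_one_le_right hD0 (hpow k))

/-- quotient of Pochhammer norms grows slower than any geometric `r > 1`. -/
lemma poch_ratio_bound (β γ : ℂ) (hγ : ∀ k : ℕ, γ ≠ -(k : ℂ)) {r : ℝ} (hr : 1 < r) :
    ∃ D, 0 ≤ D ∧ ∀ m : ℕ, ‖pochC β m‖ / ‖pochC γ m‖ ≤ D * r ^ m := by
  obtain ⟨K, hK⟩ := exists_nat_gt ((‖β‖ + r * ‖γ‖) / (r - 1))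
  have hrpos : (0 : ℝ) < r - 1 := by linarith
  have hK' : ‖β‖ + r * ‖γ‖ < (r - 1) * K := by
    rw [div_lt_iff₀ hrpos] at hK; linarith
  refine geom_bound hr.le (fun k => div_nonneg (norm_nonneg _) (norm_nonneg _)) K ?_
  intro m hm
  have hγpos : ∀ j : ℕ, (0 : ℝ) < ‖pochC γ j‖ := fun j =>
    norm_pos_iff.2 (pochC_ne_zero hγ j)
  rw [pochC_succ, pochC_succ, norm_mul, norm_mul, mul_div_mul_comm]
  have hmK : (K : ℝ) ≤ m := Nat.cast_le.2 hm
  have h1 : ‖β + (m : ℂ)‖ ≤ ‖β‖ + m := by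
    refine (norm_add_le _ _).trans ?_
    simp
  have h2 : (m : ℝ) - ‖γ‖ ≤ ‖γ + (m : ℂ)‖ := by
    have h3 : ‖(m : ℂ)‖ ≤ ‖γ + (m : ℂ)‖ + ‖γ‖ := by
      have e : (m : ℂ) = (γ + (m : ℂ)) - γ := by ring
      calc ‖(m : ℂ)‖ = ‖(γ + (m : ℂ)) - γ‖ := by rw [← e]
        _ ≤ ‖γ + (m : ℂ)‖ + ‖γ‖ := norm_sub_le _ _
    have h4 : ‖(m : ℂ)‖ = (m : ℝ) := by simp
    linarith
  have hq : ‖β + (m : ℂ)‖ / ‖γ + (m : ℂ)‖ ≤ r := by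
    have hd0 : (0 : ℝ) < ‖γ + (m : ℂ)‖ :=
      norm_pos_iff.2 (fun h0 => hγ m (by linear_combination h0))
    rw [div_le_iff₀ hd0]
    have key1 : r * ((m : ℝ) - ‖γ‖) ≤ r * ‖γ + (m : ℂ)‖ :=
      mul_le_mul_of_nonneg_left h2 (by linarith)
    have key2 : (r - 1) * (K : ℝ) ≤ (r - 1) * m :=
      mul_le_mul_of_nonneg_left hmK hrpos.le
    linarith
  calc ‖pochC β m‖ / ‖pochC γ m‖ * (‖β + (m : ℂ)‖ / ‖γ + (m : ℂ)‖)
      ≤ ‖pochC β m‖ / ‖pochC γ m‖ * r :=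
        mul_le_mul_of_nonneg_left hq (div_nonneg (norm_nonneg _) (norm_nonneg _))
    _ = r * (‖pochC β m‖ / ‖pochC γ m‖) := mul_comm _ _

noncomputable def coefC (α β₁ β₂ γ₁ γ₂ : ℂ) (m n : ℕ) : ℂ :=
  pochC α (m + n) * pochC β₁ m * pochC β₂ n /
    (pochC γ₁ m * pochC γ₂ n * m.factorial * n.factorial)

variable {α β₁ β₂ γ₁ γ₂ : ℂ}

lemma norm_coefC (hγ₁ : ∀ k : ℕ, γ₁ ≠ -(k : ℂ)) (hγ₂ : ∀ k : ℕ, γ₂ ≠ -(k : ℂ)) (m n : ℕ) :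
    ‖coefC α β₁ β₂ γ₁ γ₂ m n‖ =
      (((m + n).choose m : ℝ)) * (‖pochC α (m + n)‖ / ‖pochC 1 (m + n)‖) *
        (‖pochC β₁ m‖ / ‖pochC γ₁ m‖) * (‖pochC β₂ n‖ / ‖pochC γ₂ n‖) := by
  have keyN : (m + n).choose m * m.factorial * n.factorial = (m + n).factorial := by
    have h := Nat.choose_mul_factorial_mul_factorial (Nat.le_add_right m n)
    simpa using h
  have key : (((m + n).choose m : ℝ)) * (m.factorial : ℝ) * (n.factorial : ℝ)
      = ((m + n).factorial : ℝ) := by exact_mod_cast congrArg (fun t : ℕ => (t : ℝ)) keyN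
  have hγ1 : (0 : ℝ) < ‖pochC γ₁ m‖ := norm_pos_iff.2 (pochC_ne_zero hγ₁ m)
  have hγ2 : (0 : ℝ) < ‖pochC γ₂ n‖ := norm_pos_iff.2 (pochC_ne_zero hγ₂ n)
  have hf1 : (0 : ℝ) < (m.factorial : ℝ) := by exact_mod_cast m.factorial_pos
  have hf2 : (0 : ℝ) < (n.factorial : ℝ) := by exact_mod_cast n.factorial_pos
  have hf3 : (0 : ℝ) < ((m + n).factorial : ℝ) := by exact_mod_cast (m + n).factorial_pos
  have hchoose : (((m + n).choose m : ℝ)) = ((m + n).factorial : ℝ) /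
      ((m.factorial : ℝ) * (n.factorial : ℝ)) := by
    rw [eq_div_iff (by positivity)]
    linear_combination key
  rw [coefC, pochC_one]
  simp only [norm_div, norm_mul, Complex.norm_natCast]
  rw [hchoose]
  field_simp

lemma coef_growth (hγ₁ : ∀ k : ℕ, γ₁ ≠ -(k : ℂ)) (hγ₂ : ∀ k : ℕ, γ₂ ≠ -(k : ℂ))
    {r : ℝ} (hr : 1 < r) :
    ∃ D, 0 ≤ D ∧ ∀ m n : ℕ, ‖coefC α β₁ β₂ γ₁ γ₂ m n‖ ≤
      D * (r ^ (m + n) * r ^ m * r ^ n) * ((m + n).choose m : ℝ) := by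
  obtain ⟨D₁, hD₁0, hD₁⟩ := poch_ratio_bound α 1 one_ne_neg_nat hr
  obtain ⟨D₂, hD₂0, hD₂⟩ := poch_ratio_bound β₁ γ₁ hγ₁ hr
  obtain ⟨D₃, hD₃0, hD₃⟩ := poch_ratio_bound β₂ γ₂ hγ₂ hr
  refine ⟨D₁ * D₂ * D₃, by positivity, fun m n => ?_⟩
  rw [norm_coefC hγ₁ hγ₂]
  have e1 : ‖pochC α (m + n)‖ / ‖pochC 1 (m + n)‖ ≤ D₁ * r ^ (m + n) := hD₁ (m + n)
  have e2 : ‖pochC β₁ m‖ / ‖pochC γ₁ m‖ ≤ D₂ * r ^ m := hD₂ m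
  have e3 : ‖pochC β₂ n‖ / ‖pochC γ₂ n‖ ≤ D₃ * r ^ n := hD₃ n
  calc (((m + n).choose m : ℝ)) * (‖pochC α (m + n)‖ / ‖pochC 1 (m + n)‖) *
        (‖pochC β₁ m‖ / ‖pochC γ₁ m‖) * (‖pochC β₂ n‖ / ‖pochC γ₂ n‖)
      ≤ (((m + n).choose m : ℝ)) * (D₁ * r ^ (m + n)) * (D₂ * r ^ m) * (D₃ * r ^ n) := by
        gcongr <;> positivity
    _ = D₁ * D₂ * D₃ * (r ^ (m + n) * r ^ m * r ^ n) * ((m + n).choose m : ℝ) := by ring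

lemma binom_le {u v : ℝ} (hu : 0 ≤ u) (hv : 0 ≤ v) (m n : ℕ) :
    ((m + n).choose m : ℝ) * u ^ m * v ^ n ≤ (u + v) ^ (m + n) := by
  rw [add_pow]
  have hm : m ∈ Finset.range (m + n + 1) := by
    rw [Finset.mem_range]; omega
  have h := Finset.single_le_sum
    (f := fun k => u ^ k * v ^ (m + n - k) * ((m + n).choose k : ℝ))
    (fun i _ => by positivity) hm
  have e : u ^ m * v ^ (m + n - m) * ((m + n).choose m : ℝ)
      = ((m + n).choose m : ℝ) * u ^ m * v ^ n := by
    have : m + n - m = n := by omega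
    rw [this]; ring
  exact (le_of_eq e.symm).trans h

set_option maxHeartbeats 1000000 in
/-- Master summability lemma. -/
lemma summable_master (hγ₁ : ∀ k : ℕ, γ₁ ≠ -(k : ℂ)) (hγ₂ : ∀ k : ℕ, γ₂ ≠ -(k : ℂ))
    {u v : ℝ} (hu : 0 < u) (hv : 0 < v) (huv : u + v < 1) :
    Summable (fun p : ℕ × ℕ =>
      ((p.1 + p.2 + 1 : ℝ)) ^ 4 * ‖coefC α β₁ β₂ γ₁ γ₂ p.1 p.2‖ * u ^ p.1 * v ^ p.2) := by
  set q : ℝ := (u + v + 1) / 2 with hqdef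
  have huv0 : 0 < u + v := by linarith
  have hq1 : u + v < q := by rw [hqdef]; linarith
  have hq2 : q < 1 := by rw [hqdef]; linarith
  have hq0 : 0 < q := by linarith
  set r : ℝ := Real.sqrt (q / (u + v)) with hrdef
  have hqr : 1 < q / (u + v) := (one_lt_div huv0).2 hq1
  have hr : 1 < r := by
    rw [hrdef]
    rw [show (1:ℝ) = Real.sqrt 1 from (Real.sqrt_one).symm]
    exact Real.sqrt_lt_sqrt zero_le_one hqr
  have hr2 : r ^ 2 = q / (u + v) := Real.sq_sqrt (by positivity)
  have hr2q : r ^ 2 * (u + v) = q := by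
    rw [hr2, div_mul_cancel₀ _ (ne_of_gt huv0)]
  obtain ⟨D, hD0, hD⟩ := coef_growth hγ₁ hγ₂ hr
  have key : ∀ m n : ℕ, ((m + n + 1 : ℝ)) ^ 4 * ‖coefC α β₁ β₂ γ₁ γ₂ m n‖ * u ^ m * v ^ n
      ≤ (D * (((m : ℝ) + 1) ^ 4 * q ^ m)) * (((n : ℝ) + 1) ^ 4 * q ^ n) := by
    intro m n
    have epow : r ^ (m + n) * r ^ m * r ^ n = (r ^ 2) ^ (m + n) := by
      rw [← pow_add, ← pow_add, ← pow_mul]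
      congr 1
      ring
    have h1 : ‖coefC α β₁ β₂ γ₁ γ₂ m n‖ * (u ^ m * v ^ n) ≤ D * q ^ (m + n) := by
      calc ‖coefC α β₁ β₂ γ₁ γ₂ m n‖ * (u ^ m * v ^ n)
          ≤ (D * (r ^ (m + n) * r ^ m * r ^ n) * ((m + n).choose m : ℝ)) * (u ^ m * v ^ n) :=
            mul_le_mul_of_nonneg_right (hD m n) (by positivity)
        _ = (D * (r ^ 2) ^ (m + n)) * (((m + n).choose m : ℝ) * u ^ m * v ^ n) := by
            rw [epow]; ring
        _ ≤ (D * (r ^ 2) ^ (m + n)) * (u + v) ^ (m + n) := by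
            refine mul_le_mul_of_nonneg_left (binom_le hu.le hv.le m n) ?_
            positivity
        _ = D * (r ^ 2 * (u + v)) ^ (m + n) := by rw [mul_pow]; ring
        _ = D * q ^ (m + n) := by rw [hr2q]
    have h2 : ((m + n + 1 : ℝ)) ^ 4 ≤ (((m : ℝ) + 1) * ((n : ℝ) + 1)) ^ 4 := by
      have hmn : (m + n + 1 : ℝ) ≤ ((m : ℝ) + 1) * ((n : ℝ) + 1) := by
        have h0m : (0:ℝ) ≤ (m:ℝ) := Nat.cast_nonneg m
        have h0n : (0:ℝ) ≤ (n:ℝ) := Nat.cast_nonneg n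
        nlinarith
      exact pow_le_pow_left₀ (by positivity) hmn 4
    calc ((m + n + 1 : ℝ)) ^ 4 * ‖coefC α β₁ β₂ γ₁ γ₂ m n‖ * u ^ m * v ^ n
        = ((m + n + 1 : ℝ)) ^ 4 * (‖coefC α β₁ β₂ γ₁ γ₂ m n‖ * (u ^ m * v ^ n)) := by ring
      _ ≤ ((m + n + 1 : ℝ)) ^ 4 * (D * q ^ (m + n)) :=
          mul_le_mul_of_nonneg_left h1 (by positivity)
      _ ≤ ((((m : ℝ) + 1) * ((n : ℝ) + 1)) ^ 4) * (D * q ^ (m + n)) :=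
          mul_le_mul_of_nonneg_right h2 (by positivity)
      _ = (D * (((m : ℝ) + 1) ^ 4 * q ^ m)) * (((n : ℝ) + 1) ^ 4 * q ^ n) := by
          rw [pow_add]; ring
  have hgeom : Summable (fun k : ℕ => ((k : ℝ) + 1) ^ 4 * q ^ k) := by
    have h := summable_pow_mul_geometric_of_norm_lt_one (R := ℝ) 4
      (r := q) (by rwa [Real.norm_eq_abs, abs_of_pos hq0])
    have h2 := (summable_nat_add_iff (f := fun k : ℕ => (k : ℝ) ^ 4 * q ^ k) 1).2 h
    have h3 := h2.mul_right q⁻¹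
    refine h3.congr fun k => ?_
    have : ((k + 1 : ℕ) : ℝ) = (k : ℝ) + 1 := by push_cast; ring
    rw [this, pow_succ]
    field_simp
    ring
  have hprod : Summable (fun p : ℕ × ℕ =>
      (D * (((p.1 : ℝ) + 1) ^ 4 * q ^ p.1)) * (((p.2 : ℝ) + 1) ^ 4 * q ^ p.2)) :=
    Summable.mul_of_nonneg (hgeom.mul_left D) hgeom
      (fun m => by positivity) (fun n => by positivity)
  refine Summable.of_nonneg_of_le (fun p => by positivity) (fun p => ?_) hprod
  exact key p.1 p.2

lemma one_le_inv_aux {u : ℝ} (h0 : 0 < u) (h1 : u ≤ 1) : 1 ≤ u⁻¹ := by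
  nlinarith [mul_inv_cancel₀ (ne_of_gt h0), mul_nonneg (sub_nonneg.2 h1) (inv_nonneg.2 h0.le)]

lemma pow_pred_le {u w : ℝ} (h0 : 0 < u) (h1 : u ≤ 1) (hw : 0 ≤ w) (hwu : w ≤ u) (m : ℕ) :
    w ^ (m - 1) ≤ u ^ m * u⁻¹ := by
  refine (pow_le_pow_left₀ hw hwu _).trans ?_
  cases m with
  | zero =>
    simpa using one_le_inv_aux h0 h1
  | succ k =>
    simp only [Nat.add_sub_cancel, pow_succ, mul_assoc, mul_inv_cancel₀ (ne_of_gt h0), mul_one]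
    exact le_refl _

lemma pow_pred2_le {u w : ℝ} (h0 : 0 < u) (h1 : u ≤ 1) (hw : 0 ≤ w) (hwu : w ≤ u) (m : ℕ) :
    w ^ (m - 1 - 1) ≤ u ^ m * (u⁻¹ * u⁻¹) := by
  refine (pow_le_pow_left₀ hw hwu _).trans ?_
  have hinv := one_le_inv_aux h0 h1
  have hiv0 : (0:ℝ) ≤ u⁻¹ := inv_nonneg.2 h0.le
  match m with
  | 0 =>
    simp only [Nat.zero_sub, pow_zero, one_mul]
    nlinarith
  | 1 =>
    have e : u ^ 1 * (u⁻¹ * u⁻¹) = u⁻¹ := by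
      field_simp
    rw [e]
    simpa using hinv
  | (k+2) =>
    have e1 : k + 2 - 1 - 1 = k := by omega
    have e : u ^ (k + 2) * (u⁻¹ * u⁻¹) = u ^ k := by
      field_simp [pow_succ]
      ring
    rw [e1, e]

lemma cast_le_pow_aux (m n : ℕ) {k : ℕ} (hk : k ≠ 0) :
    ((m : ℝ)) ≤ ((m : ℝ) + n + 1) ^ k := by
  have h0m : (0:ℝ) ≤ (m:ℝ) := Nat.cast_nonneg m
  have h0n : (0:ℝ) ≤ (n:ℝ) := Nat.cast_nonneg n
  have h1 : (m:ℝ) ≤ (m:ℝ) + n + 1 := by linarith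
  exact h1.trans (le_self_pow₀ (by linarith) hk)

lemma one_le_pow4_aux (m n : ℕ) : (1:ℝ) ≤ ((m : ℝ) + n + 1) ^ 4 := by
  have h0m : (0:ℝ) ≤ (m:ℝ) := Nat.cast_nonneg m
  have h0n : (0:ℝ) ≤ (n:ℝ) := Nat.cast_nonneg n
  exact one_le_pow₀ (by linarith)

lemma sq_le_pow4_aux (m n : ℕ) {a b : ℝ} (ha : 0 ≤ a) (hb : 0 ≤ b)
    (h1 : a ≤ ((m:ℝ) + n + 1) ^ 2) (h2 : b ≤ ((m:ℝ) + n + 1) ^ 2) :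
    a * b ≤ ((m:ℝ) + n + 1) ^ 4 := by
  have := mul_le_mul h1 h2 hb (by positivity)
  calc a * b ≤ ((m:ℝ) + n + 1) ^ 2 * ((m:ℝ) + n + 1) ^ 2 := this
    _ = ((m:ℝ) + n + 1) ^ 4 := by ring

/- Norm bounds for the five series shapes. -/

lemma norm_T0_le {u v : ℝ} (hu : 0 ≤ u) (hv : 0 ≤ v) {x y : ℂ}
    (hx : ‖x‖ ≤ u) (hy : ‖y‖ ≤ v) (m n : ℕ) :
    ‖coefC α β₁ β₂ γ₁ γ₂ m n * x ^ m * y ^ n‖ ≤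
      ((m:ℝ) + n + 1) ^ 4 * ‖coefC α β₁ β₂ γ₁ γ₂ m n‖ * u ^ m * v ^ n := by
  rw [norm_mul, norm_mul, norm_pow, norm_pow]
  have h1 : ‖x‖ ^ m ≤ u ^ m := pow_le_pow_left₀ (norm_nonneg x) hx m
  have h2 : ‖y‖ ^ n ≤ v ^ n := pow_le_pow_left₀ (norm_nonneg y) hy n
  calc ‖coefC α β₁ β₂ γ₁ γ₂ m n‖ * ‖x‖ ^ m * ‖y‖ ^ n
      ≤ ‖coefC α β₁ β₂ γ₁ γ₂ m n‖ * u ^ m * v ^ n :=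
        mul_le_mul (mul_le_mul_of_nonneg_left h1 (norm_nonneg _)) h2 (by positivity) (by positivity)
    _ ≤ ((m:ℝ) + n + 1) ^ 4 * ‖coefC α β₁ β₂ γ₁ γ₂ m n‖ * u ^ m * v ^ n := by
        have h4 := one_le_pow4_aux m n
        nlinarith [mul_nonneg (mul_nonneg (norm_nonneg (coefC α β₁ β₂ γ₁ γ₂ m n)) (pow_nonneg hu m)) (pow_nonneg hv n)]

lemma norm_T1x_le {u v : ℝ} (hu : 0 < u) (hu1 : u ≤ 1) (hv : 0 ≤ v) {x y : ℂ}
    (hx : ‖x‖ ≤ u) (hy : ‖y‖ ≤ v) (m n : ℕ) :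
    ‖coefC α β₁ β₂ γ₁ γ₂ m n * ((m : ℂ) * x ^ (m - 1)) * y ^ n‖ ≤
      ((m:ℝ) + n + 1) ^ 4 * ‖coefC α β₁ β₂ γ₁ γ₂ m n‖ * u ^ m * v ^ n * u⁻¹ := by
  rw [norm_mul, norm_mul, norm_mul, norm_pow, norm_pow, Complex.norm_natCast]
  have h2 : ‖y‖ ^ n ≤ v ^ n := pow_le_pow_left₀ (norm_nonneg y) hy n
  have h3 : ‖x‖ ^ (m - 1) ≤ u ^ m * u⁻¹ := pow_pred_le hu hu1 (norm_nonneg x) hx m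
  have h4 : (m:ℝ) ≤ ((m:ℝ) + n + 1) ^ 4 := cast_le_pow_aux m n (by norm_num)
  have big : (m:ℝ) * ‖x‖ ^ (m - 1) ≤ ((m:ℝ) + n + 1) ^ 4 * (u ^ m * u⁻¹) :=
    mul_le_mul h4 h3 (by positivity) (by positivity)
  calc ‖coefC α β₁ β₂ γ₁ γ₂ m n‖ * ((m:ℝ) * ‖x‖ ^ (m - 1)) * ‖y‖ ^ n
      ≤ ‖coefC α β₁ β₂ γ₁ γ₂ m n‖ * (((m:ℝ) + n + 1) ^ 4 * (u ^ m * u⁻¹)) * v ^ n :=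
        mul_le_mul (mul_le_mul_of_nonneg_left big (norm_nonneg _)) h2 (by positivity) (by positivity)
    _ = ((m:ℝ) + n + 1) ^ 4 * ‖coefC α β₁ β₂ γ₁ γ₂ m n‖ * u ^ m * v ^ n * u⁻¹ := by ring

lemma norm_T1y_le {u v : ℝ} (hu : 0 ≤ u) (hv : 0 < v) (hv1 : v ≤ 1) {x y : ℂ}
    (hx : ‖x‖ ≤ u) (hy : ‖y‖ ≤ v) (m n : ℕ) :
    ‖coefC α β₁ β₂ γ₁ γ₂ m n * x ^ m * ((n : ℂ) * y ^ (n - 1))‖ ≤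
      ((m:ℝ) + n + 1) ^ 4 * ‖coefC α β₁ β₂ γ₁ γ₂ m n‖ * u ^ m * v ^ n * v⁻¹ := by
  rw [norm_mul, norm_mul, norm_mul, norm_pow, norm_pow, Complex.norm_natCast]
  have h1 : ‖x‖ ^ m ≤ u ^ m := pow_le_pow_left₀ (norm_nonneg x) hx m
  have h3 : ‖y‖ ^ (n - 1) ≤ v ^ n * v⁻¹ := pow_pred_le hv hv1 (norm_nonneg y) hy n
  have h4 : (n:ℝ) ≤ ((m:ℝ) + n + 1) ^ 4 := by
    have h0m : (0:ℝ) ≤ (m:ℝ) := Nat.cast_nonneg m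
    have := cast_le_pow_aux n m (k := 4) (by norm_num)
    refine this.trans ?_
    have e : (n:ℝ) + m + 1 = (m:ℝ) + n + 1 := by ring
    rw [e]
  have big : (n:ℝ) * ‖y‖ ^ (n - 1) ≤ ((m:ℝ) + n + 1) ^ 4 * (v ^ n * v⁻¹) :=
    mul_le_mul h4 h3 (by positivity) (by positivity)
  calc ‖coefC α β₁ β₂ γ₁ γ₂ m n‖ * ‖x‖ ^ m * ((n:ℝ) * ‖y‖ ^ (n - 1))
      ≤ ‖coefC α β₁ β₂ γ₁ γ₂ m n‖ * u ^ m * (((m:ℝ) + n + 1) ^ 4 * (v ^ n * v⁻¹)) :=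
        mul_le_mul (mul_le_mul_of_nonneg_left h1 (norm_nonneg _)) big (by positivity) (by positivity)
    _ = ((m:ℝ) + n + 1) ^ 4 * ‖coefC α β₁ β₂ γ₁ γ₂ m n‖ * u ^ m * v ^ n * v⁻¹ := by ring

lemma norm_T2xy_le {u v : ℝ} (hu : 0 < u) (hu1 : u ≤ 1) (hv : 0 < v) (hv1 : v ≤ 1) {x y : ℂ}
    (hx : ‖x‖ ≤ u) (hy : ‖y‖ ≤ v) (m n : ℕ) :
    ‖coefC α β₁ β₂ γ₁ γ₂ m n * ((m : ℂ) * x ^ (m - 1)) * ((n : ℂ) * y ^ (n - 1))‖ ≤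
      ((m:ℝ) + n + 1) ^ 4 * ‖coefC α β₁ β₂ γ₁ γ₂ m n‖ * u ^ m * v ^ n * (u⁻¹ * v⁻¹) := by
  rw [norm_mul, norm_mul, norm_mul, norm_mul, norm_pow, norm_pow, Complex.norm_natCast,
    Complex.norm_natCast]
  have h3 : ‖x‖ ^ (m - 1) ≤ u ^ m * u⁻¹ := pow_pred_le hu hu1 (norm_nonneg x) hx m
  have h5 : ‖y‖ ^ (n - 1) ≤ v ^ n * v⁻¹ := pow_pred_le hv hv1 (norm_nonneg y) hy n
  have h4 : (m:ℝ) ≤ ((m:ℝ) + n + 1) ^ 2 := cast_le_pow_aux m n (by norm_num)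
  have h6 : (n:ℝ) ≤ ((m:ℝ) + n + 1) ^ 2 := by
    have := cast_le_pow_aux n m (k := 2) (by norm_num)
    refine this.trans (le_of_eq ?_)
    ring
  have big1 : (m:ℝ) * ‖x‖ ^ (m - 1) ≤ ((m:ℝ) + n + 1) ^ 2 * (u ^ m * u⁻¹) :=
    mul_le_mul h4 h3 (by positivity) (by positivity)
  have big2 : (n:ℝ) * ‖y‖ ^ (n - 1) ≤ ((m:ℝ) + n + 1) ^ 2 * (v ^ n * v⁻¹) :=
    mul_le_mul h6 h5 (by positivity) (by positivity)
  calc ‖coefC α β₁ β₂ γ₁ γ₂ m n‖ * ((m:ℝ) * ‖x‖ ^ (m - 1)) * ((n:ℝ) * ‖y‖ ^ (n - 1))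
      ≤ ‖coefC α β₁ β₂ γ₁ γ₂ m n‖ * (((m:ℝ) + n + 1) ^ 2 * (u ^ m * u⁻¹)) *
          (((m:ℝ) + n + 1) ^ 2 * (v ^ n * v⁻¹)) :=
        mul_le_mul (mul_le_mul_of_nonneg_left big1 (norm_nonneg _)) big2 (by positivity)
          (by positivity)
    _ = ((m:ℝ) + n + 1) ^ 4 * ‖coefC α β₁ β₂ γ₁ γ₂ m n‖ * u ^ m * v ^ n * (u⁻¹ * v⁻¹) := by
        ring

lemma norm_T2yy_le {u v : ℝ} (hu : 0 ≤ u) (hv : 0 < v) (hv1 : v ≤ 1) {x y : ℂ}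
    (hx : ‖x‖ ≤ u) (hy : ‖y‖ ≤ v) (m n : ℕ) :
    ‖coefC α β₁ β₂ γ₁ γ₂ m n * x ^ m * ((n : ℂ) * (((n - 1 : ℕ) : ℂ) * y ^ (n - 1 - 1)))‖ ≤
      ((m:ℝ) + n + 1) ^ 4 * ‖coefC α β₁ β₂ γ₁ γ₂ m n‖ * u ^ m * v ^ n * (v⁻¹ * v⁻¹) := by
  rw [norm_mul, norm_mul, norm_mul, norm_mul, norm_pow, norm_pow, Complex.norm_natCast,
    Complex.norm_natCast]
  have h1 : ‖x‖ ^ m ≤ u ^ m := pow_le_pow_left₀ (norm_nonneg x) hx m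
  have h3 : ‖y‖ ^ (n - 1 - 1) ≤ v ^ n * (v⁻¹ * v⁻¹) := pow_pred2_le hv hv1 (norm_nonneg y) hy n
  have h6 : (n:ℝ) ≤ ((m:ℝ) + n + 1) ^ 2 := by
    have := cast_le_pow_aux n m (k := 2) (by norm_num)
    refine this.trans (le_of_eq ?_)
    ring
  have h7 : ((n - 1 : ℕ) : ℝ) ≤ ((m:ℝ) + n + 1) ^ 2 := by
    have hc : ((n - 1 : ℕ) : ℝ) ≤ (n : ℝ) := Nat.cast_le.2 (Nat.sub_le n 1)
    exact hc.trans h6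
  have big : (n:ℝ) * (((n - 1 : ℕ) : ℝ) * ‖y‖ ^ (n - 1 - 1)) ≤
      ((m:ℝ) + n + 1) ^ 4 * (v ^ n * (v⁻¹ * v⁻¹)) := by
    have b2 : ((n - 1 : ℕ) : ℝ) * ‖y‖ ^ (n - 1 - 1) ≤
        ((m:ℝ) + n + 1) ^ 2 * (v ^ n * (v⁻¹ * v⁻¹)) :=
      mul_le_mul h7 h3 (by positivity) (by positivity)
    calc (n:ℝ) * (((n - 1 : ℕ) : ℝ) * ‖y‖ ^ (n - 1 - 1))
        ≤ ((m:ℝ) + n + 1) ^ 2 * (((m:ℝ) + n + 1) ^ 2 * (v ^ n * (v⁻¹ * v⁻¹))) :=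
          mul_le_mul h6 b2 (by positivity) (by positivity)
      _ = ((m:ℝ) + n + 1) ^ 4 * (v ^ n * (v⁻¹ * v⁻¹)) := by ring
  calc ‖coefC α β₁ β₂ γ₁ γ₂ m n‖ * ‖x‖ ^ m * ((n:ℝ) * (((n - 1 : ℕ) : ℝ) * ‖y‖ ^ (n - 1 - 1)))
      ≤ ‖coefC α β₁ β₂ γ₁ γ₂ m n‖ * u ^ m * (((m:ℝ) + n + 1) ^ 4 * (v ^ n * (v⁻¹ * v⁻¹))) :=
        mul_le_mul (mul_le_mul_of_nonneg_left h1 (norm_nonneg _)) big (by positivity) (by positivity)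
    _ = ((m:ℝ) + n + 1) ^ 4 * ‖coefC α β₁ β₂ γ₁ γ₂ m n‖ * u ^ m * v ^ n * (v⁻¹ * v⁻¹) := by ring

lemma exists_uv {x y : ℂ} (h : ‖x‖ + ‖y‖ < 1) :
    ∃ u v : ℝ, 0 < u ∧ 0 < v ∧ ‖x‖ < u ∧ ‖y‖ < v ∧ u + v < 1 ∧ u ≤ 1 ∧ v ≤ 1 := by
  have hx0 := norm_nonneg x
  have hy0 := norm_nonneg y
  refine ⟨‖x‖ + (1 - ‖x‖ - ‖y‖) / 4, ‖y‖ + (1 - ‖x‖ - ‖y‖) / 4, by linarith, by linarith,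
    by linarith, by linarith, by linarith, by linarith, by linarith⟩

/- Summability of the five series at a point of the domain. -/

lemma summable_T0 (hγ₁ : ∀ k : ℕ, γ₁ ≠ -(k : ℂ)) (hγ₂ : ∀ k : ℕ, γ₂ ≠ -(k : ℂ))
    {x y : ℂ} (h : ‖x‖ + ‖y‖ < 1) :
    Summable (fun p : ℕ × ℕ => coefC α β₁ β₂ γ₁ γ₂ p.1 p.2 * x ^ p.1 * y ^ p.2) := by
  obtain ⟨u, v, hu, hv, hxu, hyv, huv, hu1, hv1⟩ := exists_uv h
  refine Summable.of_norm (Summable.of_nonneg_of_le (fun p => norm_nonneg _) (fun p => ?_)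
    (summable_master (α := α) (β₁ := β₁) (β₂ := β₂) hγ₁ hγ₂ hu hv huv))
  exact norm_T0_le hu.le hv.le hxu.le hyv.le p.1 p.2

lemma summable_T1x (hγ₁ : ∀ k : ℕ, γ₁ ≠ -(k : ℂ)) (hγ₂ : ∀ k : ℕ, γ₂ ≠ -(k : ℂ))
    {x y : ℂ} (h : ‖x‖ + ‖y‖ < 1) :
    Summable (fun p : ℕ × ℕ =>
      coefC α β₁ β₂ γ₁ γ₂ p.1 p.2 * ((p.1 : ℂ) * x ^ (p.1 - 1)) * y ^ p.2) := by
  obtain ⟨u, v, hu, hv, hxu, hyv, huv, hu1, hv1⟩ := exists_uv h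
  refine Summable.of_norm (Summable.of_nonneg_of_le (fun p => norm_nonneg _) (fun p => ?_)
    ((summable_master (α := α) (β₁ := β₁) (β₂ := β₂) hγ₁ hγ₂ hu hv huv).mul_right u⁻¹))
  exact norm_T1x_le hu hu1 hv.le hxu.le hyv.le p.1 p.2

lemma summable_T1y (hγ₁ : ∀ k : ℕ, γ₁ ≠ -(k : ℂ)) (hγ₂ : ∀ k : ℕ, γ₂ ≠ -(k : ℂ))
    {x y : ℂ} (h : ‖x‖ + ‖y‖ < 1) :
    Summable (fun p : ℕ × ℕ =>
      coefC α β₁ β₂ γ₁ γ₂ p.1 p.2 * x ^ p.1 * ((p.2 : ℂ) * y ^ (p.2 - 1))) := by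
  obtain ⟨u, v, hu, hv, hxu, hyv, huv, hu1, hv1⟩ := exists_uv h
  refine Summable.of_norm (Summable.of_nonneg_of_le (fun p => norm_nonneg _) (fun p => ?_)
    ((summable_master (α := α) (β₁ := β₁) (β₂ := β₂) hγ₁ hγ₂ hu hv huv).mul_right v⁻¹))
  exact norm_T1y_le hu.le hv hv1 hxu.le hyv.le p.1 p.2

lemma summable_T2xy (hγ₁ : ∀ k : ℕ, γ₁ ≠ -(k : ℂ)) (hγ₂ : ∀ k : ℕ, γ₂ ≠ -(k : ℂ))
    {x y : ℂ} (h : ‖x‖ + ‖y‖ < 1) :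
    Summable (fun p : ℕ × ℕ =>
      coefC α β₁ β₂ γ₁ γ₂ p.1 p.2 * ((p.1 : ℂ) * x ^ (p.1 - 1)) * ((p.2 : ℂ) * y ^ (p.2 - 1))) := by
  obtain ⟨u, v, hu, hv, hxu, hyv, huv, hu1, hv1⟩ := exists_uv h
  refine Summable.of_norm (Summable.of_nonneg_of_le (fun p => norm_nonneg _) (fun p => ?_)
    ((summable_master (α := α) (β₁ := β₁) (β₂ := β₂) hγ₁ hγ₂ hu hv huv).mul_right (u⁻¹ * v⁻¹)))
  exact norm_T2xy_le hu hu1 hv hv1 hxu.le hyv.le p.1 p.2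

lemma summable_T2yy (hγ₁ : ∀ k : ℕ, γ₁ ≠ -(k : ℂ)) (hγ₂ : ∀ k : ℕ, γ₂ ≠ -(k : ℂ))
    {x y : ℂ} (h : ‖x‖ + ‖y‖ < 1) :
    Summable (fun p : ℕ × ℕ =>
      coefC α β₁ β₂ γ₁ γ₂ p.1 p.2 * x ^ p.1 *
        ((p.2 : ℂ) * (((p.2 - 1 : ℕ) : ℂ) * y ^ (p.2 - 1 - 1)))) := by
  obtain ⟨u, v, hu, hv, hxu, hyv, huv, hu1, hv1⟩ := exists_uv h
  refine Summable.of_norm (Summable.of_nonneg_of_le (fun p => norm_nonneg _) (fun p => ?_)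
    ((summable_master (α := α) (β₁ := β₁) (β₂ := β₂) hγ₁ hγ₂ hu hv huv).mul_right (v⁻¹ * v⁻¹)))
  exact norm_T2yy_le hu.le hv hv1 hxu.le hyv.le p.1 p.2

/- Termwise differentiation. -/

lemma appellF2C_eq (x y : ℂ) : appellF2C α β₁ β₂ γ₁ γ₂ x y =
    ∑' p : ℕ × ℕ, coefC α β₁ β₂ γ₁ γ₂ p.1 p.2 * x ^ p.1 * y ^ p.2 := rfl

lemma hasDerivAt_F_x (hγ₁ : ∀ k : ℕ, γ₁ ≠ -(k : ℂ)) (hγ₂ : ∀ k : ℕ, γ₂ ≠ -(k : ℂ))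
    {x y : ℂ} (h : ‖x‖ + ‖y‖ < 1) :
    HasDerivAt (fun x' => appellF2C α β₁ β₂ γ₁ γ₂ x' y)
      (∑' p : ℕ × ℕ, coefC α β₁ β₂ γ₁ γ₂ p.1 p.2 * ((p.1 : ℂ) * x ^ (p.1 - 1)) * y ^ p.2) x := by
  obtain ⟨u, v, hu, hv, hxu, hyv, huv, hu1, hv1⟩ := exists_uv h
  have hball : x ∈ Metric.ball (0 : ℂ) u := by
    simpa [mem_ball_zero_iff] using hxu
  have H := hasDerivAt_tsum_of_isPreconnected
    (u := fun p : ℕ × ℕ =>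
      ((p.1 : ℝ) + p.2 + 1) ^ 4 * ‖coefC α β₁ β₂ γ₁ γ₂ p.1 p.2‖ * u ^ p.1 * v ^ p.2 * u⁻¹)
    (g := fun (p : ℕ × ℕ) (x' : ℂ) => coefC α β₁ β₂ γ₁ γ₂ p.1 p.2 * x' ^ p.1 * y ^ p.2)
    (g' := fun (p : ℕ × ℕ) (x' : ℂ) =>
      coefC α β₁ β₂ γ₁ γ₂ p.1 p.2 * ((p.1 : ℂ) * x' ^ (p.1 - 1)) * y ^ p.2)
    ((summable_master (α := α) (β₁ := β₁) (β₂ := β₂) hγ₁ hγ₂ hu hv huv).mul_right u⁻¹)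
    Metric.isOpen_ball (convex_ball (0 : ℂ) u).isPreconnected
    (fun p x' _ => ((hasDerivAt_pow p.1 x').const_mul (coefC α β₁ β₂ γ₁ γ₂ p.1 p.2)).mul_const
      (y ^ p.2))
    (fun p x' hx' => norm_T1x_le hu hu1 hv.le (le_of_lt (mem_ball_zero_iff.1 hx')) hyv.le p.1 p.2)
    hball (summable_T0 (α := α) (β₁ := β₁) (β₂ := β₂) hγ₁ hγ₂ h) hball
  simpa only [← appellF2C_eq] using H

lemma hasDerivAt_F_y (hγ₁ : ∀ k : ℕ, γ₁ ≠ -(k : ℂ)) (hγ₂ : ∀ k : ℕ, γ₂ ≠ -(k : ℂ))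
    {x y : ℂ} (h : ‖x‖ + ‖y‖ < 1) :
    HasDerivAt (fun y' => appellF2C α β₁ β₂ γ₁ γ₂ x y')
      (∑' p : ℕ × ℕ, coefC α β₁ β₂ γ₁ γ₂ p.1 p.2 * x ^ p.1 * ((p.2 : ℂ) * y ^ (p.2 - 1))) y := by
  obtain ⟨u, v, hu, hv, hxu, hyv, huv, hu1, hv1⟩ := exists_uv h
  have hball : y ∈ Metric.ball (0 : ℂ) v := by
    simpa [mem_ball_zero_iff] using hyv
  have H := hasDerivAt_tsum_of_isPreconnected
    (u := fun p : ℕ × ℕ =>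
      ((p.1 : ℝ) + p.2 + 1) ^ 4 * ‖coefC α β₁ β₂ γ₁ γ₂ p.1 p.2‖ * u ^ p.1 * v ^ p.2 * v⁻¹)
    (g := fun (p : ℕ × ℕ) (y' : ℂ) => coefC α β₁ β₂ γ₁ γ₂ p.1 p.2 * x ^ p.1 * y' ^ p.2)
    (g' := fun (p : ℕ × ℕ) (y' : ℂ) =>
      coefC α β₁ β₂ γ₁ γ₂ p.1 p.2 * x ^ p.1 * ((p.2 : ℂ) * y' ^ (p.2 - 1)))
    ((summable_master (α := α) (β₁ := β₁) (β₂ := β₂) hγ₁ hγ₂ hu hv huv).mul_right v⁻¹)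
    Metric.isOpen_ball (convex_ball (0 : ℂ) v).isPreconnected
    (fun p y' _ => (hasDerivAt_pow p.2 y').const_mul (coefC α β₁ β₂ γ₁ γ₂ p.1 p.2 * x ^ p.1))
    (fun p y' hy' => norm_T1y_le hu.le hv hv1 hxu.le (le_of_lt (mem_ball_zero_iff.1 hy')) p.1 p.2)
    hball (summable_T0 (α := α) (β₁ := β₁) (β₂ := β₂) hγ₁ hγ₂ h) hball
  simpa only [← appellF2C_eq] using H

lemma hasDerivAt_G_y (hγ₁ : ∀ k : ℕ, γ₁ ≠ -(k : ℂ)) (hγ₂ : ∀ k : ℕ, γ₂ ≠ -(k : ℂ))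
    {x y : ℂ} (h : ‖x‖ + ‖y‖ < 1) :
    HasDerivAt (fun y' =>
        ∑' p : ℕ × ℕ, coefC α β₁ β₂ γ₁ γ₂ p.1 p.2 * ((p.1 : ℂ) * x ^ (p.1 - 1)) * y' ^ p.2)
      (∑' p : ℕ × ℕ,
        coefC α β₁ β₂ γ₁ γ₂ p.1 p.2 * ((p.1 : ℂ) * x ^ (p.1 - 1)) * ((p.2 : ℂ) * y ^ (p.2 - 1)))
      y := by
  obtain ⟨u, v, hu, hv, hxu, hyv, huv, hu1, hv1⟩ := exists_uv h
  have hball : y ∈ Metric.ball (0 : ℂ) v := by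
    simpa [mem_ball_zero_iff] using hyv
  exact hasDerivAt_tsum_of_isPreconnected
    (u := fun p : ℕ × ℕ =>
      ((p.1 : ℝ) + p.2 + 1) ^ 4 * ‖coefC α β₁ β₂ γ₁ γ₂ p.1 p.2‖ * u ^ p.1 * v ^ p.2 * (u⁻¹ * v⁻¹))
    ((summable_master (α := α) (β₁ := β₁) (β₂ := β₂) hγ₁ hγ₂ hu hv huv).mul_right (u⁻¹ * v⁻¹))
    Metric.isOpen_ball (convex_ball (0 : ℂ) v).isPreconnected
    (fun p y' _ => (hasDerivAt_pow p.2 y').const_mul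
      (coefC α β₁ β₂ γ₁ γ₂ p.1 p.2 * ((p.1 : ℂ) * x ^ (p.1 - 1))))
    (fun p y' hy' => norm_T2xy_le hu hu1 hv hv1 hxu.le (le_of_lt (mem_ball_zero_iff.1 hy'))
      p.1 p.2)
    hball (summable_T1x (α := α) (β₁ := β₁) (β₂ := β₂) hγ₁ hγ₂ h) hball

lemma hasDerivAt_H_y (hγ₁ : ∀ k : ℕ, γ₁ ≠ -(k : ℂ)) (hγ₂ : ∀ k : ℕ, γ₂ ≠ -(k : ℂ))
    {x y : ℂ} (h : ‖x‖ + ‖y‖ < 1) :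
    HasDerivAt (fun y' =>
        ∑' p : ℕ × ℕ, coefC α β₁ β₂ γ₁ γ₂ p.1 p.2 * x ^ p.1 * ((p.2 : ℂ) * y' ^ (p.2 - 1)))
      (∑' p : ℕ × ℕ, coefC α β₁ β₂ γ₁ γ₂ p.1 p.2 * x ^ p.1 *
        ((p.2 : ℂ) * (((p.2 - 1 : ℕ) : ℂ) * y ^ (p.2 - 1 - 1)))) y := by
  obtain ⟨u, v, hu, hv, hxu, hyv, huv, hu1, hv1⟩ := exists_uv h
  have hball : y ∈ Metric.ball (0 : ℂ) v := by
    simpa [mem_ball_zero_iff] using hyv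
  exact hasDerivAt_tsum_of_isPreconnected
    (u := fun p : ℕ × ℕ =>
      ((p.1 : ℝ) + p.2 + 1) ^ 4 * ‖coefC α β₁ β₂ γ₁ γ₂ p.1 p.2‖ * u ^ p.1 * v ^ p.2 * (v⁻¹ * v⁻¹))
    ((summable_master (α := α) (β₁ := β₁) (β₂ := β₂) hγ₁ hγ₂ hu hv huv).mul_right (v⁻¹ * v⁻¹))
    Metric.isOpen_ball (convex_ball (0 : ℂ) v).isPreconnected
    (fun p y' _ => ((hasDerivAt_pow (p.2 - 1) y').const_mul ((p.2 : ℂ))).const_mul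
      (coefC α β₁ β₂ γ₁ γ₂ p.1 p.2 * x ^ p.1))
    (fun p y' hy' => norm_T2yy_le hu.le hv hv1 hxu.le (le_of_lt (mem_ball_zero_iff.1 hy'))
      p.1 p.2)
    hball (summable_T1y (α := α) (β₁ := β₁) (β₂ := β₂) hγ₁ hγ₂ h) hball

/- The coefficient recurrence in the second index. -/

lemma coef_rec (hγ₁ : ∀ k : ℕ, γ₁ ≠ -(k : ℂ)) (hγ₂ : ∀ k : ℕ, γ₂ ≠ -(k : ℂ)) (m n : ℕ) :
    coefC α β₁ β₂ γ₁ γ₂ m (n + 1) * ((γ₂ + n) * ((n : ℂ) + 1)) =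
      coefC α β₁ β₂ γ₁ γ₂ m n * ((α + m + n) * (β₂ + n)) := by
  have e1 : m + (n + 1) = (m + n) + 1 := rfl
  have hne1 : pochC γ₁ m ≠ 0 := pochC_ne_zero hγ₁ m
  have hne2 : pochC γ₂ n ≠ 0 := pochC_ne_zero hγ₂ n
  have hne3 : ((m.factorial : ℂ)) ≠ 0 := Nat.cast_ne_zero.2 (Nat.factorial_ne_zero m)
  have hne4 : ((n.factorial : ℂ)) ≠ 0 := Nat.cast_ne_zero.2 (Nat.factorial_ne_zero n)
  have hne5 : ((n : ℂ) + 1) ≠ 0 := Nat.cast_add_one_ne_zero n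
  have hne6 : (γ₂ + (n : ℂ)) ≠ 0 := fun hz => hγ₂ n (by linear_combination hz)
  rw [coefC, coefC, e1, pochC_succ, pochC_succ, pochC_succ, Nat.factorial_succ]
  rw [div_mul_eq_mul_div, div_mul_eq_mul_div, div_eq_div_iff
    (by push_cast
        exact mul_ne_zero (mul_ne_zero (mul_ne_zero hne1 (mul_ne_zero hne2 hne6)) hne3)
          (mul_ne_zero hne5 hne4))
    (mul_ne_zero (mul_ne_zero (mul_ne_zero hne1 hne2) hne3) hne4)]
  push_cast
  ring

/- Row summability of the telescoping sequence. -/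

lemma summable_g_row (hγ₁ : ∀ k : ℕ, γ₁ ≠ -(k : ℂ)) (hγ₂ : ∀ k : ℕ, γ₂ ≠ -(k : ℂ))
    {x y : ℂ} (h : ‖x‖ + ‖y‖ < 1) (m : ℕ) :
    Summable (fun n : ℕ =>
      coefC α β₁ β₂ γ₁ γ₂ m n * ((α + m + n) * (β₂ + n)) * x ^ m * y ^ n) := by
  obtain ⟨u, v, hu, hv, hxu, hyv, huv, hu1, hv1⟩ := exists_uv h
  have master := (summable_master (α := α) (β₁ := β₁) (β₂ := β₂) hγ₁ hγ₂ hu hv huv).prod_factor m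
  refine Summable.of_norm (Summable.of_nonneg_of_le (fun n => norm_nonneg _) (fun n => ?_)
    (master.mul_left ((‖α‖ + 1) * (‖β₂‖ + 1))))
  have hm0 : (0:ℝ) ≤ (m:ℝ) := Nat.cast_nonneg m
  have hn0 : (0:ℝ) ≤ (n:ℝ) := Nat.cast_nonneg n
  have hbase : (1:ℝ) ≤ (m:ℝ) + n + 1 := by linarith
  rw [norm_mul, norm_mul, norm_mul, norm_pow, norm_pow]
  have hxm : ‖x‖ ^ m ≤ u ^ m := pow_le_pow_left₀ (norm_nonneg x) hxu.le m
  have hyn : ‖y‖ ^ n ≤ v ^ n := pow_le_pow_left₀ (norm_nonneg y) hyv.le n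
  have h1 : ‖α + (m : ℂ) + (n : ℂ)‖ ≤ (‖α‖ + 1) * ((m:ℝ) + n + 1) := by
    have ha : ‖α + (m : ℂ) + (n : ℂ)‖ ≤ ‖α‖ + m + n := by
      calc ‖α + (m : ℂ) + (n : ℂ)‖ ≤ ‖α + (m : ℂ)‖ + ‖(n : ℂ)‖ := norm_add_le _ _
        _ ≤ ‖α‖ + ‖(m : ℂ)‖ + ‖(n : ℂ)‖ := by linarith [norm_add_le α ((m : ℂ))]
        _ = ‖α‖ + m + n := by simp
    nlinarith [norm_nonneg α]
  have h2 : ‖β₂ + (n : ℂ)‖ ≤ (‖β₂‖ + 1) * ((m:ℝ) + n + 1) := by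
    have hb : ‖β₂ + (n : ℂ)‖ ≤ ‖β₂‖ + n := by
      calc ‖β₂ + (n : ℂ)‖ ≤ ‖β₂‖ + ‖(n : ℂ)‖ := norm_add_le _ _
        _ = ‖β₂‖ + n := by simp
    nlinarith [norm_nonneg β₂]
  have hα : ‖(α + m + n) * (β₂ + n)‖ ≤ (‖α‖ + 1) * (‖β₂‖ + 1) * ((m:ℝ) + n + 1) ^ 2 := by
    rw [norm_mul]
    calc ‖α + (m : ℂ) + (n : ℂ)‖ * ‖β₂ + (n : ℂ)‖
        ≤ ((‖α‖ + 1) * ((m:ℝ) + n + 1)) * ((‖β₂‖ + 1) * ((m:ℝ) + n + 1)) :=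
          mul_le_mul h1 h2 (norm_nonneg _) (by positivity)
      _ = (‖α‖ + 1) * (‖β₂‖ + 1) * ((m:ℝ) + n + 1) ^ 2 := by ring
  have hsq : ((m:ℝ) + n + 1) ^ 2 ≤ ((m:ℝ) + n + 1) ^ 4 := by
    have hs2 : (1:ℝ) ≤ ((m:ℝ) + n + 1) ^ 2 := one_le_pow₀ hbase
    calc ((m:ℝ) + n + 1) ^ 2 = ((m:ℝ) + n + 1) ^ 2 * 1 := (mul_one _).symm
      _ ≤ ((m:ℝ) + n + 1) ^ 2 * ((m:ℝ) + n + 1) ^ 2 :=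
          mul_le_mul_of_nonneg_left hs2 (by positivity)
      _ = ((m:ℝ) + n + 1) ^ 4 := by ring
  calc ‖coefC α β₁ β₂ γ₁ γ₂ m n‖ * ‖(α + m + n) * (β₂ + n)‖ * ‖x‖ ^ m * ‖y‖ ^ n
      ≤ ‖coefC α β₁ β₂ γ₁ γ₂ m n‖ * ((‖α‖ + 1) * (‖β₂‖ + 1) * ((m:ℝ) + n + 1) ^ 2) *
          u ^ m * v ^ n := by
        refine mul_le_mul (mul_le_mul (mul_le_mul_of_nonneg_left hα (norm_nonneg _)) hxm
          (by positivity) (by positivity)) hyn (by positivity) (by positivity)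
    _ ≤ ‖coefC α β₁ β₂ γ₁ γ₂ m n‖ * ((‖α‖ + 1) * (‖β₂‖ + 1) * ((m:ℝ) + n + 1) ^ 4) *
          u ^ m * v ^ n := by
        refine mul_le_mul (mul_le_mul (mul_le_mul_of_nonneg_left ?_ (norm_nonneg _)) le_rfl
          (by positivity) (by positivity)) le_rfl (by positivity) (by positivity)
        have := mul_le_mul_of_nonneg_left hsq (by positivity : (0:ℝ) ≤ (‖α‖ + 1) * (‖β₂‖ + 1))
        linarith [this]
    _ = (‖α‖ + 1) * (‖β₂‖ + 1) * (((m:ℝ) + (n:ℝ) + 1) ^ 4 * ‖coefC α β₁ β₂ γ₁ γ₂ m n‖ *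
          u ^ m * v ^ n) := by ring

/- The pointwise telescoping identities. -/

lemma pow_shift_x (x : ℂ) (m : ℕ) : (m : ℂ) * x ^ (m - 1) * x = (m : ℂ) * x ^ m := by
  cases m with
  | zero => simp
  | succ k =>
    simp only [Nat.add_sub_cancel, pow_succ]
    ring

lemma E_zero (hγ₁ : ∀ k : ℕ, γ₁ ≠ -(k : ℂ)) (hγ₂ : ∀ k : ℕ, γ₂ ≠ -(k : ℂ)) (x y : ℂ) (m : ℕ) :
    y * (1 - y) * (coefC α β₁ β₂ γ₁ γ₂ m 0 * x ^ m *
        (((0 : ℕ) : ℂ) * ((((0 : ℕ) - 1 : ℕ) : ℂ) * y ^ ((0 : ℕ) - 1 - 1))))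
      - x * y * (coefC α β₁ β₂ γ₁ γ₂ m 0 * ((m : ℂ) * x ^ (m - 1)) *
        (((0 : ℕ) : ℂ) * y ^ ((0 : ℕ) - 1)))
      + (γ₂ - (α + β₂ + 1) * y) * (coefC α β₁ β₂ γ₁ γ₂ m 0 * x ^ m *
        (((0 : ℕ) : ℂ) * y ^ ((0 : ℕ) - 1)))
      - β₂ * x * (coefC α β₁ β₂ γ₁ γ₂ m 0 * ((m : ℂ) * x ^ (m - 1)) * y ^ (0 : ℕ))
      - α * β₂ * (coefC α β₁ β₂ γ₁ γ₂ m 0 * x ^ m * y ^ (0 : ℕ))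
    = -(coefC α β₁ β₂ γ₁ γ₂ m 0 * ((α + m + (0 : ℕ)) * (β₂ + (0 : ℕ))) * x ^ m *
        y ^ (0 : ℕ)) := by
  have hx := pow_shift_x x m
  push_cast
  linear_combination (-β₂ * coefC α β₁ β₂ γ₁ γ₂ m 0) * hx

lemma E_step (hγ₁ : ∀ k : ℕ, γ₁ ≠ -(k : ℂ)) (hγ₂ : ∀ k : ℕ, γ₂ ≠ -(k : ℂ)) (x y : ℂ)
    (m n : ℕ) :
    y * (1 - y) * (coefC α β₁ β₂ γ₁ γ₂ m (n + 1) * x ^ m *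
        (((n + 1 : ℕ) : ℂ) * ((((n + 1) - 1 : ℕ) : ℂ) * y ^ ((n + 1) - 1 - 1))))
      - x * y * (coefC α β₁ β₂ γ₁ γ₂ m (n + 1) * ((m : ℂ) * x ^ (m - 1)) *
        (((n + 1 : ℕ) : ℂ) * y ^ ((n + 1) - 1)))
      + (γ₂ - (α + β₂ + 1) * y) * (coefC α β₁ β₂ γ₁ γ₂ m (n + 1) * x ^ m *
        (((n + 1 : ℕ) : ℂ) * y ^ ((n + 1) - 1)))
      - β₂ * x * (coefC α β₁ β₂ γ₁ γ₂ m (n + 1) * ((m : ℂ) * x ^ (m - 1)) * y ^ (n + 1))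
      - α * β₂ * (coefC α β₁ β₂ γ₁ γ₂ m (n + 1) * x ^ m * y ^ (n + 1))
    = coefC α β₁ β₂ γ₁ γ₂ m n * ((α + m + n) * (β₂ + n)) * x ^ m * y ^ n
      - coefC α β₁ β₂ γ₁ γ₂ m (n + 1) * ((α + m + ((n + 1 : ℕ) : ℂ)) *
          (β₂ + ((n + 1 : ℕ) : ℂ))) * x ^ m * y ^ (n + 1) := by
  simp only [Nat.add_sub_cancel]
  have hx := pow_shift_x x m
  have hy := pow_shift_x y n
  have hrec := coef_rec (α := α) (β₁ := β₁) (β₂ := β₂) hγ₁ hγ₂ m n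
  push_cast
  linear_combination ((1 - y) * coefC α β₁ β₂ γ₁ γ₂ m (n + 1) * x ^ m * ((n : ℂ) + 1)) * hy +
    (-(coefC α β₁ β₂ γ₁ γ₂ m (n + 1)) * y ^ n * y * ((n : ℂ) + 1 + β₂)) * hx +
    (x ^ m * y ^ n) * hrec

/- The combined PDE term. -/

noncomputable def Efun (α β₁ β₂ γ₁ γ₂ x y : ℂ) (p : ℕ × ℕ) : ℂ :=
  y * (1 - y) * (coefC α β₁ β₂ γ₁ γ₂ p.1 p.2 * x ^ p.1 *
      ((p.2 : ℂ) * (((p.2 - 1 : ℕ) : ℂ) * y ^ (p.2 - 1 - 1))))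
    - x * y * (coefC α β₁ β₂ γ₁ γ₂ p.1 p.2 * ((p.1 : ℂ) * x ^ (p.1 - 1)) *
      ((p.2 : ℂ) * y ^ (p.2 - 1)))
    + (γ₂ - (α + β₂ + 1) * y) * (coefC α β₁ β₂ γ₁ γ₂ p.1 p.2 * x ^ p.1 *
      ((p.2 : ℂ) * y ^ (p.2 - 1)))
    - β₂ * x * (coefC α β₁ β₂ γ₁ γ₂ p.1 p.2 * ((p.1 : ℂ) * x ^ (p.1 - 1)) * y ^ p.2)
    - α * β₂ * (coefC α β₁ β₂ γ₁ γ₂ p.1 p.2 * x ^ p.1 * y ^ p.2)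

lemma summable_Efun (hγ₁ : ∀ k : ℕ, γ₁ ≠ -(k : ℂ)) (hγ₂ : ∀ k : ℕ, γ₂ ≠ -(k : ℂ))
    {x y : ℂ} (h : ‖x‖ + ‖y‖ < 1) : Summable (Efun α β₁ β₂ γ₁ γ₂ x y) := by
  have s2yy := (summable_T2yy (α := α) (β₁ := β₁) (β₂ := β₂) hγ₁ hγ₂ h).mul_left (y * (1 - y))
  have s2xy := (summable_T2xy (α := α) (β₁ := β₁) (β₂ := β₂) hγ₁ hγ₂ h).mul_left (x * y)
  have s1y := (summable_T1y (α := α) (β₁ := β₁) (β₂ := β₂) hγ₁ hγ₂ h).mul_left (γ₂ - (α + β₂ + 1) * y)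
  have s1x := (summable_T1x (α := α) (β₁ := β₁) (β₂ := β₂) hγ₁ hγ₂ h).mul_left (β₂ * x)
  have s0 := (summable_T0 (α := α) (β₁ := β₁) (β₂ := β₂) hγ₁ hγ₂ h).mul_left (α * β₂)
  exact (((s2yy.sub s2xy).add s1y).sub s1x).sub s0

lemma row_sum_zero (hγ₁ : ∀ k : ℕ, γ₁ ≠ -(k : ℂ)) (hγ₂ : ∀ k : ℕ, γ₂ ≠ -(k : ℂ))
    {x y : ℂ} (h : ‖x‖ + ‖y‖ < 1) (m : ℕ) :
    ∑' n : ℕ, Efun α β₁ β₂ γ₁ γ₂ x y (m, n) = 0 := by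
  have hsm : Summable (fun n : ℕ => Efun α β₁ β₂ γ₁ γ₂ x y (m, n)) :=
    (summable_Efun hγ₁ hγ₂ h).prod_factor m
  have hgsum := summable_g_row (α := α) (β₁ := β₁) (β₂ := β₂) hγ₁ hγ₂ h m
  have hgz := hgsum.tendsto_atTop_zero
  have hps : ∀ N : ℕ, (∑ n ∈ Finset.range (N + 1), Efun α β₁ β₂ γ₁ γ₂ x y (m, n)) =
      -(coefC α β₁ β₂ γ₁ γ₂ m N * ((α + m + N) * (β₂ + N)) * x ^ m * y ^ N) := by
    intro N
    induction N with
    | zero =>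
      rw [Finset.sum_range_one]
      exact E_zero hγ₁ hγ₂ x y m
    | succ N ih =>
      rw [Finset.sum_range_succ, ih]
      have e : Efun α β₁ β₂ γ₁ γ₂ x y (m, N + 1) =
          coefC α β₁ β₂ γ₁ γ₂ m N * ((α + m + N) * (β₂ + N)) * x ^ m * y ^ N
            - coefC α β₁ β₂ γ₁ γ₂ m (N + 1) * ((α + m + ((N + 1 : ℕ) : ℂ)) *
                (β₂ + ((N + 1 : ℕ) : ℂ))) * x ^ m * y ^ (N + 1) :=
        E_step hγ₁ hγ₂ x y m N
      rw [e]
      ring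
  have h1 := hsm.hasSum.tendsto_sum_nat
  have h2 : Filter.Tendsto
      (fun N : ℕ => ∑ n ∈ Finset.range (N + 1), Efun α β₁ β₂ γ₁ γ₂ x y (m, n))
      Filter.atTop (nhds (∑' n : ℕ, Efun α β₁ β₂ γ₁ γ₂ x y (m, n))) :=
    h1.comp (Filter.tendsto_add_atTop_nat 1)
  have h3 : Filter.Tendsto
      (fun N : ℕ => -(coefC α β₁ β₂ γ₁ γ₂ m N * ((α + m + N) * (β₂ + N)) * x ^ m * y ^ N))
      Filter.atTop (nhds 0) := by
    simpa using hgz.neg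
  exact tendsto_nhds_unique h2 (h3.congr fun N => (hps N).symm)

end AppellAux

open AppellAux in

/-- For `γ₁, γ₂` not non-positive integers, the Appell `F₂` function satisfies the
second Appell `F₂` partial differential equation
`y(1−y) F_{yy} − x y F_{xy} + (γ₂ − (α+β₂+1)y) F_y − β₂ x F_x − α β₂ F = 0`
on the domain `{(x,y) : |x| + |y| < 1}`. -/
theorem appellF2_second_PDE
    (α β₁ β₂ γ₁ γ₂ : ℂ) (hγ₁ : ∀ n : ℕ, γ₁ ≠ -(n : ℂ)) (hγ₂ : ∀ n : ℕ, γ₂ ≠ -(n : ℂ)) :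
    ∀ x y : ℂ, ‖x‖ + ‖y‖ < 1 →
      y * (1 - y) * dY (dY (appellF2C α β₁ β₂ γ₁ γ₂)) x y
        - x * y * dY (dX (appellF2C α β₁ β₂ γ₁ γ₂)) x y
        + (γ₂ - (α + β₂ + 1) * y) * dY (appellF2C α β₁ β₂ γ₁ γ₂) x y
        - β₂ * x * dX (appellF2C α β₁ β₂ γ₁ γ₂) x y
        - α * β₂ * appellF2C α β₁ β₂ γ₁ γ₂ x y = 0 := by
  intro x y h
  have hopen : IsOpen {y' : ℂ | ‖x‖ + ‖y'‖ < 1} :=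
    isOpen_lt (continuous_const.add continuous_norm) continuous_const
  have hdXval : ∀ x' y' : ℂ, ‖x'‖ + ‖y'‖ < 1 → dX (appellF2C α β₁ β₂ γ₁ γ₂) x' y' =
      ∑' p : ℕ × ℕ, coefC α β₁ β₂ γ₁ γ₂ p.1 p.2 * ((p.1 : ℂ) * x' ^ (p.1 - 1)) * y' ^ p.2 :=
    fun x' y' h' => (hasDerivAt_F_x hγ₁ hγ₂ h').deriv
  have hdYval : ∀ x' y' : ℂ, ‖x'‖ + ‖y'‖ < 1 → dY (appellF2C α β₁ β₂ γ₁ γ₂) x' y' =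
      ∑' p : ℕ × ℕ, coefC α β₁ β₂ γ₁ γ₂ p.1 p.2 * x' ^ p.1 * ((p.2 : ℂ) * y' ^ (p.2 - 1)) :=
    fun x' y' h' => (hasDerivAt_F_y hγ₁ hγ₂ h').deriv
  have hdYdX : dY (dX (appellF2C α β₁ β₂ γ₁ γ₂)) x y =
      ∑' p : ℕ × ℕ, coefC α β₁ β₂ γ₁ γ₂ p.1 p.2 * ((p.1 : ℂ) * x ^ (p.1 - 1)) *
        ((p.2 : ℂ) * y ^ (p.2 - 1)) := by
    have hev : (fun y' => dX (appellF2C α β₁ β₂ γ₁ γ₂) x y') =ᶠ[nhds y]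
        (fun y' => ∑' p : ℕ × ℕ,
          coefC α β₁ β₂ γ₁ γ₂ p.1 p.2 * ((p.1 : ℂ) * x ^ (p.1 - 1)) * y' ^ p.2) := by
      filter_upwards [hopen.mem_nhds h] with y' hy' using hdXval x y' hy'
    show deriv (fun y' => dX (appellF2C α β₁ β₂ γ₁ γ₂) x y') y = _
    rw [hev.deriv_eq]
    exact (hasDerivAt_G_y hγ₁ hγ₂ h).deriv
  have hdYdY : dY (dY (appellF2C α β₁ β₂ γ₁ γ₂)) x y =
      ∑' p : ℕ × ℕ, coefC α β₁ β₂ γ₁ γ₂ p.1 p.2 * x ^ p.1 *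
        ((p.2 : ℂ) * (((p.2 - 1 : ℕ) : ℂ) * y ^ (p.2 - 1 - 1))) := by
    have hev : (fun y' => dY (appellF2C α β₁ β₂ γ₁ γ₂) x y') =ᶠ[nhds y]
        (fun y' => ∑' p : ℕ × ℕ,
          coefC α β₁ β₂ γ₁ γ₂ p.1 p.2 * x ^ p.1 * ((p.2 : ℂ) * y' ^ (p.2 - 1))) := by
      filter_upwards [hopen.mem_nhds h] with y' hy' using hdYval x y' hy'
    show deriv (fun y' => dY (appellF2C α β₁ β₂ γ₁ γ₂) x y') y = _
    rw [hev.deriv_eq]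
    exact (hasDerivAt_H_y hγ₁ hγ₂ h).deriv
  rw [hdYdY, hdYdX, hdYval x y h, hdXval x y h, appellF2C_eq]
  have hA := ((summable_T2yy (α := α) (β₁ := β₁) (β₂ := β₂) hγ₁ hγ₂ h).hasSum).mul_left (y * (1 - y))
  have hB := ((summable_T2xy (α := α) (β₁ := β₁) (β₂ := β₂) hγ₁ hγ₂ h).hasSum).mul_left (x * y)
  have hC := ((summable_T1y (α := α) (β₁ := β₁) (β₂ := β₂) hγ₁ hγ₂ h).hasSum).mul_left (γ₂ - (α + β₂ + 1) * y)
  have hD := ((summable_T1x (α := α) (β₁ := β₁) (β₂ := β₂) hγ₁ hγ₂ h).hasSum).mul_left (β₂ * x)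
  have hE := ((summable_T0 (α := α) (β₁ := β₁) (β₂ := β₂) hγ₁ hγ₂ h).hasSum).mul_left (α * β₂)
  have hcomb := (((hA.sub hB).add hC).sub hD).sub hE
  rw [← hcomb.tsum_eq]
  rw [Summable.tsum_prod hcomb.summable]
  refine (tsum_congr fun m => ?_).trans tsum_zero
  exact row_sum_zero hγ₁ hγ₂ h m
end

section
/- Let τ ∈ ℂ with Im τ > 0. Then the Jacobi theta functions satisfy the Jacobi identity θ₂(τ)⁴ + θ₄(τ)⁴ = θ₃(τ)⁴. -/
open Complex Real

/-- The Jacobi theta constant `θ₂(τ) = ∑_{n∈ℤ} exp(iπτ(n+1/2)²)`. -/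
noncomputable def theta2 (τ : ℂ) : ℂ :=
  ∑' n : ℤ, Complex.exp (Real.pi * Complex.I * τ * ((n : ℂ) + 1 / 2) ^ 2)

/-- The Jacobi theta constant `θ₃(τ) = ∑_{n∈ℤ} exp(iπτ n²)`. -/
noncomputable def theta3 (τ : ℂ) : ℂ :=
  ∑' n : ℤ, Complex.exp (Real.pi * Complex.I * τ * (n : ℂ) ^ 2)

/-- The Jacobi theta constant `θ₄(τ) = ∑_{n∈ℤ} (−1)ⁿ exp(iπτ n²)`. -/
noncomputable def theta4 (τ : ℂ) : ℂ :=
  ∑' n : ℤ, (-1 : ℂ) ^ n * Complex.exp (Real.pi * Complex.I * τ * (n : ℂ) ^ 2)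

namespace JacobiAux

lemma summable_shift (τ : ℂ) (hτ : 0 < τ.im) (a : ℂ) :
    Summable fun n : ℤ => Complex.exp (π * I * τ * ((n : ℂ) + a) ^ 2) := by
  have h := ((summable_jacobiTheta₂_term_iff (a * τ) τ).mpr hτ).mul_left
    (Complex.exp (π * I * τ * a ^ 2))
  refine h.congr fun n => ?_
  rw [jacobiTheta₂_term, ← Complex.exp_add]
  congr 1
  ring

lemma summable3 (τ : ℂ) (hτ : 0 < τ.im) :
    Summable fun n : ℤ => Complex.exp (π * I * τ * (n : ℂ) ^ 2) := by
  simpa using summable_shift τ hτ 0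

lemma summable2 (τ : ℂ) (hτ : 0 < τ.im) :
    Summable fun n : ℤ => Complex.exp (π * I * τ * ((n : ℂ) + 1 / 2) ^ 2) :=
  summable_shift τ hτ (1 / 2)

lemma summable4 (τ : ℂ) (hτ : 0 < τ.im) :
    Summable fun n : ℤ => (-1 : ℂ) ^ n * Complex.exp (π * I * τ * (n : ℂ) ^ 2) := by
  have h := (summable_jacobiTheta₂_term_iff (1 / 2) τ).mpr hτ
  refine h.congr fun n => ?_
  rw [jacobiTheta₂_term,
    show (2 * π * I * n * (1 / 2) + π * I * n ^ 2 * τ : ℂ)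
      = (n : ℂ) * (π * I) + π * I * τ * (n : ℂ) ^ 2 by ring,
    Complex.exp_add, Complex.exp_int_mul, Complex.exp_pi_mul_I]

lemma im2 {τ : ℂ} (hτ : 0 < τ.im) : 0 < (2 * τ).im := by
  have : (2 * τ).im = 2 * τ.im := by simp
  rw [this]; linarith

lemma neg_one_zpow_even {n : ℤ} (h : Even n) : (-1 : ℂ) ^ n = 1 := Even.neg_one_zpow h

lemma neg_one_zpow_odd {n : ℤ} (h : Odd n) : (-1 : ℂ) ^ n = -1 := Odd.neg_one_zpow h

lemma zpow_neg_one_add (m n : ℤ) : (-1 : ℂ) ^ m * (-1 : ℂ) ^ n = (-1 : ℂ) ^ (m + n) :=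
  (zpow_add₀ (by norm_num) m n).symm

/-- Doubling identity (a): θ₃(τ)² + θ₄(τ)² = 2 θ₃(2τ)². -/
lemma idA (τ : ℂ) (hτ : 0 < τ.im) : theta3 τ ^ 2 + theta4 τ ^ 2 = 2 * theta3 (2 * τ) ^ 2 := by
  have h2 := im2 hτ
  have s3 := summable3 τ hτ
  have s4 := summable4 τ hτ
  have s3' := summable3 (2 * τ) h2
  have n3 : Summable fun n : ℤ => ‖Complex.exp (π * I * τ * (n : ℂ) ^ 2)‖ :=
    summable_norm_iff.mpr s3
  have n4 : Summable fun n : ℤ => ‖(-1 : ℂ) ^ n * Complex.exp (π * I * τ * (n : ℂ) ^ 2)‖ :=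
    summable_norm_iff.mpr s4
  have n3' : Summable fun n : ℤ => ‖Complex.exp (π * I * (2 * τ) * (n : ℂ) ^ 2)‖ :=
    summable_norm_iff.mpr s3'
  -- the combined double-sum term
  set F : ℤ × ℤ → ℂ := fun p =>
    Complex.exp (π * I * τ * (p.1 : ℂ) ^ 2) * Complex.exp (π * I * τ * (p.2 : ℂ) ^ 2) +
      ((-1 : ℂ) ^ p.1 * Complex.exp (π * I * τ * (p.1 : ℂ) ^ 2)) *
        ((-1 : ℂ) ^ p.2 * Complex.exp (π * I * τ * (p.2 : ℂ) ^ 2)) with hF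
  have hFeq : ∀ p : ℤ × ℤ, F p = (1 + (-1 : ℂ) ^ (p.1 + p.2)) *
      (Complex.exp (π * I * τ * (p.1 : ℂ) ^ 2) * Complex.exp (π * I * τ * (p.2 : ℂ) ^ 2)) := by
    intro p
    rw [hF, ← zpow_neg_one_add]
    ring
  have hg : Function.Injective (fun q : ℤ × ℤ => (q.1 + q.2, q.1 - q.2)) := by
    intro q q' h
    rw [Prod.ext_iff] at h ⊢
    simp only [Prod.mk.injEq] at h
    omega
  have hsupp : Function.support F ⊆ Set.range (fun q : ℤ × ℤ => (q.1 + q.2, q.1 - q.2)) := by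
    rintro ⟨m, n⟩ hp
    by_contra hcon
    apply hp
    have hodd : Odd (m + n) := by
      rcases Int.even_or_odd (m + n) with he | ho
      · exfalso
        obtain ⟨k, hk⟩ := he
        exact hcon ⟨(k, m - k), by simp only [Prod.mk.injEq]; omega⟩
      · exact ho
    rw [hFeq, neg_one_zpow_odd hodd]
    ring
  calc theta3 τ ^ 2 + theta4 τ ^ 2
      = ∑' p : ℤ × ℤ, F p := by
        rw [theta3, theta4, sq, sq, tsum_mul_tsum_of_summable_norm n3 n3,
          tsum_mul_tsum_of_summable_norm n4 n4]
        exact (Summable.tsum_add (summable_mul_of_summable_norm n3 n3)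
          (summable_mul_of_summable_norm n4 n4)).symm
    _ = ∑' q : ℤ × ℤ, F (q.1 + q.2, q.1 - q.2) := (hg.tsum_eq hsupp).symm
    _ = ∑' q : ℤ × ℤ, 2 * (Complex.exp (π * I * (2 * τ) * (q.1 : ℂ) ^ 2) *
          Complex.exp (π * I * (2 * τ) * (q.2 : ℂ) ^ 2)) := by
        refine tsum_congr fun q => ?_
        rw [hFeq]
        have heven : (1 + (-1 : ℂ) ^ (q.1 + q.2 + (q.1 - q.2))) = 2 := by
          rw [neg_one_zpow_even ⟨q.1, by ring⟩]; norm_num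
        simp only
        rw [heven, ← Complex.exp_add, ← Complex.exp_add]
        congr 2
        push_cast
        ring
    _ = 2 * theta3 (2 * τ) ^ 2 := by
        rw [tsum_mul_left, theta3, sq, tsum_mul_tsum_of_summable_norm n3' n3']

/-- Doubling identity (b): θ₃(τ)² − θ₄(τ)² = 2 θ₂(2τ)². -/
lemma idB (τ : ℂ) (hτ : 0 < τ.im) : theta3 τ ^ 2 - theta4 τ ^ 2 = 2 * theta2 (2 * τ) ^ 2 := by
  have h2 := im2 hτ
  have s3 := summable3 τ hτ
  have s4 := summable4 τ hτ
  have s2' := summable2 (2 * τ) h2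
  have n3 : Summable fun n : ℤ => ‖Complex.exp (π * I * τ * (n : ℂ) ^ 2)‖ :=
    summable_norm_iff.mpr s3
  have n4 : Summable fun n : ℤ => ‖(-1 : ℂ) ^ n * Complex.exp (π * I * τ * (n : ℂ) ^ 2)‖ :=
    summable_norm_iff.mpr s4
  have n2' : Summable fun n : ℤ => ‖Complex.exp (π * I * (2 * τ) * ((n : ℂ) + 1 / 2) ^ 2)‖ :=
    summable_norm_iff.mpr s2'
  set F : ℤ × ℤ → ℂ := fun p =>
    Complex.exp (π * I * τ * (p.1 : ℂ) ^ 2) * Complex.exp (π * I * τ * (p.2 : ℂ) ^ 2) -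
      ((-1 : ℂ) ^ p.1 * Complex.exp (π * I * τ * (p.1 : ℂ) ^ 2)) *
        ((-1 : ℂ) ^ p.2 * Complex.exp (π * I * τ * (p.2 : ℂ) ^ 2)) with hF
  have hFeq : ∀ p : ℤ × ℤ, F p = (1 - (-1 : ℂ) ^ (p.1 + p.2)) *
      (Complex.exp (π * I * τ * (p.1 : ℂ) ^ 2) * Complex.exp (π * I * τ * (p.2 : ℂ) ^ 2)) := by
    intro p
    rw [hF, ← zpow_neg_one_add]
    ring
  have hg : Function.Injective (fun q : ℤ × ℤ => (q.1 + q.2 + 1, q.1 - q.2)) := by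
    intro q q' h
    rw [Prod.ext_iff] at h ⊢
    simp only [Prod.mk.injEq] at h
    omega
  have hsupp : Function.support F ⊆ Set.range (fun q : ℤ × ℤ => (q.1 + q.2 + 1, q.1 - q.2)) := by
    rintro ⟨m, n⟩ hp
    by_contra hcon
    apply hp
    have heven : Even (m + n) := by
      rcases Int.even_or_odd (m + n) with he | ho
      · exact he
      · exfalso
        obtain ⟨k, hk⟩ := ho
        exact hcon ⟨(k, m - k - 1), by simp only [Prod.mk.injEq]; omega⟩
    rw [hFeq, neg_one_zpow_even heven]
    ring
  calc theta3 τ ^ 2 - theta4 τ ^ 2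
      = ∑' p : ℤ × ℤ, F p := by
        rw [theta3, theta4, sq, sq, tsum_mul_tsum_of_summable_norm n3 n3,
          tsum_mul_tsum_of_summable_norm n4 n4]
        exact ((summable_mul_of_summable_norm n3 n3).tsum_sub
          (summable_mul_of_summable_norm n4 n4)).symm
    _ = ∑' q : ℤ × ℤ, F (q.1 + q.2 + 1, q.1 - q.2) := (hg.tsum_eq hsupp).symm
    _ = ∑' q : ℤ × ℤ, 2 * (Complex.exp (π * I * (2 * τ) * ((q.1 : ℂ) + 1 / 2) ^ 2) *
          Complex.exp (π * I * (2 * τ) * ((q.2 : ℂ) + 1 / 2) ^ 2)) := by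
        refine tsum_congr fun q => ?_
        rw [hFeq]
        have hodd : (1 - (-1 : ℂ) ^ (q.1 + q.2 + 1 + (q.1 - q.2))) = 2 := by
          rw [neg_one_zpow_odd ⟨q.1, by ring⟩]; norm_num
        simp only
        rw [hodd, ← Complex.exp_add, ← Complex.exp_add]
        congr 2
        push_cast
        ring
    _ = 2 * theta2 (2 * τ) ^ 2 := by
        rw [tsum_mul_left, theta2, sq, tsum_mul_tsum_of_summable_norm n2' n2']

/-- Doubling identity (c): θ₂(τ)² = 2 θ₂(2τ) θ₃(2τ). -/
lemma idC (τ : ℂ) (hτ : 0 < τ.im) :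
    theta2 τ ^ 2 = 2 * (theta2 (2 * τ) * theta3 (2 * τ)) := by
  have h2 := im2 hτ
  have s2 := summable2 τ hτ
  have s2' := summable2 (2 * τ) h2
  have s3' := summable3 (2 * τ) h2
  have n2 : Summable fun n : ℤ => ‖Complex.exp (π * I * τ * ((n : ℂ) + 1 / 2) ^ 2)‖ :=
    summable_norm_iff.mpr s2
  have n2' : Summable fun n : ℤ => ‖Complex.exp (π * I * (2 * τ) * ((n : ℂ) + 1 / 2) ^ 2)‖ :=
    summable_norm_iff.mpr s2'
  have n3' : Summable fun n : ℤ => ‖Complex.exp (π * I * (2 * τ) * (n : ℂ) ^ 2)‖ :=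
    summable_norm_iff.mpr s3'
  have sF0 : Summable (fun p : ℤ × ℤ => Complex.exp (π * I * τ * ((p.1 : ℂ) + 1 / 2) ^ 2) *
      Complex.exp (π * I * τ * ((p.2 : ℂ) + 1 / 2) ^ 2)) :=
    summable_mul_of_summable_norm
      (f := fun n : ℤ => Complex.exp (π * I * τ * ((n : ℂ) + 1 / 2) ^ 2))
      (g := fun n : ℤ => Complex.exp (π * I * τ * ((n : ℂ) + 1 / 2) ^ 2)) n2 n2
  set F : ℤ × ℤ → ℂ := fun p =>
    Complex.exp (π * I * τ * ((p.1 : ℂ) + 1 / 2) ^ 2) *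
      Complex.exp (π * I * τ * ((p.2 : ℂ) + 1 / 2) ^ 2) with hF
  have sF : Summable F := sF0
  set G : ℤ × ℤ → ℂ := fun p => if Even (p.1 + p.2) then F p else 0 with hG
  set H : ℤ × ℤ → ℂ := fun p => if Even (p.1 + p.2) then 0 else F p with hH
  have hFGH : ∀ p, F p = G p + H p := by
    intro p
    rw [hG, hH]
    by_cases h : Even (p.1 + p.2) <;> simp [h]
  have sG : Summable G := by
    refine Summable.of_norm_bounded (summable_norm_iff.mpr sF) fun p => ?_
    rw [hG]
    by_cases h : Even (p.1 + p.2) <;> simp [h]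
  have sH : Summable H := by
    refine Summable.of_norm_bounded (summable_norm_iff.mpr sF) fun p => ?_
    rw [hH]
    by_cases h : Even (p.1 + p.2) <;> simp [h]
  -- even part equals θ₂(2τ)·θ₃(2τ)
  have hu : Function.Injective (fun q : ℤ × ℤ => (q.1 + q.2, q.1 - q.2)) := by
    intro q q' h
    rw [Prod.ext_iff] at h ⊢
    simp only [Prod.mk.injEq] at h
    omega
  have hsuppG : Function.support G ⊆ Set.range (fun q : ℤ × ℤ => (q.1 + q.2, q.1 - q.2)) := by
    rintro ⟨m, n⟩ hp
    by_contra hcon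
    apply hp
    rw [hG]
    have : ¬ Even (m + n) := by
      intro he
      obtain ⟨k, hk⟩ := he
      exact hcon ⟨(k, m - k), by simp only [Prod.mk.injEq]; omega⟩
    simp [this]
  have hGsum : ∑' p : ℤ × ℤ, G p = theta2 (2 * τ) * theta3 (2 * τ) := by
    rw [← hu.tsum_eq hsuppG, theta2, theta3, tsum_mul_tsum_of_summable_norm n2' n3']
    refine tsum_congr fun q => ?_
    rw [hG]
    have he : Even (q.1 + q.2 + (q.1 - q.2)) := ⟨q.1, by ring⟩
    simp only [he, if_true]
    rw [hF]
    simp only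
    rw [← Complex.exp_add, ← Complex.exp_add]
    congr 1
    push_cast
    ring
  -- odd part equals θ₃(2τ)·θ₂(2τ)
  have hv : Function.Injective (fun q : ℤ × ℤ => (q.1 + q.2, q.1 - q.2 - 1)) := by
    intro q q' h
    rw [Prod.ext_iff] at h ⊢
    simp only [Prod.mk.injEq] at h
    omega
  have hsuppH : Function.support H ⊆ Set.range (fun q : ℤ × ℤ => (q.1 + q.2, q.1 - q.2 - 1)) := by
    rintro ⟨m, n⟩ hp
    by_contra hcon
    apply hp
    rw [hH]
    have : Even (m + n) := by
      rcases Int.even_or_odd (m + n) with he | ho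
      · exact he
      · exfalso
        obtain ⟨k, hk⟩ := ho
        exact hcon ⟨(k + 1, m - k - 1), by simp only [Prod.mk.injEq]; omega⟩
    simp [this]
  have hHsum : ∑' p : ℤ × ℤ, H p = theta3 (2 * τ) * theta2 (2 * τ) := by
    rw [← hv.tsum_eq hsuppH, theta2, theta3, tsum_mul_tsum_of_summable_norm n3' n2']
    refine tsum_congr fun q => ?_
    rw [hH]
    have ho : ¬ Even (q.1 + q.2 + (q.1 - q.2 - 1)) := by
      intro he
      obtain ⟨k, hk⟩ := he
      omega
    simp only [ho, if_false]
    rw [hF]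
    simp only
    rw [← Complex.exp_add, ← Complex.exp_add]
    congr 1
    push_cast
    ring
  calc theta2 τ ^ 2
      = ∑' p : ℤ × ℤ, F p := by
        rw [theta2, sq, tsum_mul_tsum_of_summable_norm n2 n2]
    _ = ∑' p : ℤ × ℤ, (G p + H p) := tsum_congr hFGH
    _ = (∑' p : ℤ × ℤ, G p) + ∑' p : ℤ × ℤ, H p := Summable.tsum_add sG sH
    _ = 2 * (theta2 (2 * τ) * theta3 (2 * τ)) := by
        rw [hGsum, hHsum]; ring

end JacobiAux

/-- The Jacobi identity `θ₂(τ)⁴ + θ₄(τ)⁴ = θ₃(τ)⁴` for `τ` in the upper half-plane. -/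
theorem jacobi_theta_identity (τ : ℂ) (hτ : 0 < τ.im) :
    theta2 τ ^ 4 + theta4 τ ^ 4 = theta3 τ ^ 4 := by
  have hA := JacobiAux.idA τ hτ
  have hB := JacobiAux.idB τ hτ
  have hC := JacobiAux.idC τ hτ
  have key : theta3 τ ^ 4 - theta4 τ ^ 4 = theta2 τ ^ 4 := by
    have : theta3 τ ^ 4 - theta4 τ ^ 4 = (theta3 τ ^ 2 - theta4 τ ^ 2) *
        (theta3 τ ^ 2 + theta4 τ ^ 2) := by ring
    rw [this, hA, hB]
    have : theta2 τ ^ 4 = (theta2 τ ^ 2) ^ 2 := by ring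
    rw [this, hC]
    ring
  linear_combination (-1 : ℂ) * key
end
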